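/- arXiv:1503.05381 — 5 statements merged into one kernel-verified Lean document; each statement's English description precedes it below -/
import Mathlib

section
/- Let μ be a probability measure on ℝ^d, {D_t} a family of trimmed regions for μ with associated trimmed σ-algebras F_t, and g: ℝ^d → [0,∞) Borel and square-integrable w.r.t. μ. For t ∈ (0,1) set g_t(x) = g(x) for x ∈ D_t and g_t(x) = G_t for x ∈ Q_t (so that g_t is a version of the conditional expectation E_μ[g | F_t]). Then for all 0 < s < t < 1 and every bounded F_s-measurable function α, one has ∫_{ℝ^d} α (g_t² − g_s²) dμ = ∫_{D_t \ D_s} α(x) (g(x) − G_{τ(x)})² μ(dx). -/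
open MeasureTheory Set Real Filter

noncomputable section

/-- A family of *trimmed regions* for a probability measure `μ` on `ℝ^d`:
closed sets `D t`, `t ∈ [0,1]`, nondecreasing, with `μ (D 0) = 0`, `μ (D t) < 1`
for `t < 1`, `D 1 = ℝ^d`, left jumps `μ`-null, and right-continuity. -/
structure TrimmedFamily (d : ℕ) (μ : Measure (Fin d → ℝ)) : Type where
  D : ℝ → Set (Fin d → ℝ)
  isClosed : ∀ t ∈ Icc (0:ℝ) 1, IsClosed (D t)
  mono : ∀ s t : ℝ, 0 ≤ s → s ≤ t → t ≤ 1 → D s ⊆ D t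
  null_zero : μ (D 0) = 0
  meas_lt_one : ∀ t : ℝ, 0 ≤ t → t < 1 → μ (D t) < 1
  one_eq_univ : D 1 = univ
  left_jump_null : ∀ t : ℝ, 0 < t → t ≤ 1 → μ (D t \ ⋃ s ∈ Ico (0:ℝ) t, D s) = 0
  right_cont : ∀ t : ℝ, 0 ≤ t → t < 1 → D t = ⋂ s ∈ Ioc t (1:ℝ), D s

namespace TrimmedFamily

variable {d : ℕ} {μ : Measure (Fin d → ℝ)} (T : TrimmedFamily d μ)

/-- `Q t = ℝ^d \ D t`. -/
def Q (t : ℝ) : Set (Fin d → ℝ) := (T.D t)ᶜ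

/-- `τ(x) = inf {t ∈ [0,1] : x ∈ D t}`. -/
def tau (x : Fin d → ℝ) : ℝ := sInf {t | t ∈ Icc (0:ℝ) 1 ∧ x ∈ T.D t}

/-- `μ_t = μ(Q_t)` (as a real number). -/
def muQ (t : ℝ) : ℝ := (μ (T.Q t)).toReal

/-- `G_t = (1/μ(Q_t)) ∫_{Q_t} g dμ`. -/
def G (g : (Fin d → ℝ) → ℝ) (t : ℝ) : ℝ := (∫ y in T.Q t, g y ∂μ) / T.muQ t

end TrimmedFamily

/-- The entropy `Ent_μ g = ∫ g log g dμ − (∫ g dμ) log (∫ g dμ)`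
(with the convention `0 log 0 = 0`, which is automatic since `Real.log 0 = 0`). -/
def entropy {α : Type*} [MeasurableSpace α] (μ : Measure α) (g : α → ℝ) : ℝ :=
  (∫ x, g x * Real.log (g x) ∂μ) - (∫ x, g x ∂μ) * Real.log (∫ x, g x ∂μ)

/-- The trimmed σ-algebra `F_t`: Borel sets `A` with `μ (A ∩ Q_t) = 0` or `μ (Q_t \ A) = 0`. -/
def trimmedMS {d : ℕ} (μ : Measure (Fin d → ℝ)) (Qt : Set (Fin d → ℝ)) :
    MeasurableSpace (Fin d → ℝ) where
  MeasurableSet' A := MeasurableSet A ∧ (μ (A ∩ Qt) = 0 ∨ μ (Qt \ A) = 0)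
  measurableSet_empty := ⟨MeasurableSet.empty, Or.inl (by simp)⟩
  measurableSet_compl := by
    rintro A ⟨hA, h⟩
    refine ⟨hA.compl, ?_⟩
    rcases h with h | h
    · exact Or.inr (by rwa [show Qt \ Aᶜ = A ∩ Qt by ext x; simp [Set.mem_diff, and_comm]])
    · exact Or.inl (by rwa [show Aᶜ ∩ Qt = Qt \ A by ext x; simp [Set.mem_diff, and_comm]])
  measurableSet_iUnion := by
    intro s hs
    refine ⟨MeasurableSet.iUnion fun i => (hs i).1, ?_⟩
    by_cases h : ∀ i, μ (s i ∩ Qt) = 0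
    · refine Or.inl ?_
      rw [Set.iUnion_inter]
      exact measure_iUnion_null h
    · push_neg at h
      obtain ⟨i, hi⟩ := h
      exact Or.inr (measure_mono_null (Set.diff_subset_diff_right (Set.subset_iUnion s i))
        ((hs i).2.resolve_left hi))

namespace Helpers
set_option linter.unusedSectionVars false
set_option linter.unusedVariables false

variable {d : ℕ} {μ : Measure (Fin d → ℝ)} [IsProbabilityMeasure μ] (T : TrimmedFamily d μ)

lemma measD {u : ℝ} (h0 : 0 ≤ u) (h1 : u ≤ 1) : MeasurableSet (T.D u) :=
  (T.isClosed u ⟨h0, h1⟩).measurableSet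

lemma tau_nonempty (x : Fin d → ℝ) : {t | t ∈ Icc (0:ℝ) 1 ∧ x ∈ T.D t}.Nonempty :=
  ⟨1, ⟨zero_le_one, le_rfl⟩, by rw [T.one_eq_univ]; trivial⟩

lemma tau_bddBelow (x : Fin d → ℝ) : BddBelow {t | t ∈ Icc (0:ℝ) 1 ∧ x ∈ T.D t} :=
  ⟨0, fun v hv => hv.1.1⟩

lemma tau_le {u : ℝ} {x : Fin d → ℝ} (h0 : 0 ≤ u) (h1 : u ≤ 1) (hx : x ∈ T.D u) :
    T.tau x ≤ u :=
  csInf_le (tau_bddBelow T x) ⟨⟨h0, h1⟩, hx⟩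

lemma le_tau {u : ℝ} {x : Fin d → ℝ} (h1 : u ≤ 1) (hx : x ∉ T.D u) : u ≤ T.tau x := by
  refine le_csInf (tau_nonempty T x) ?_
  intro v hv
  by_contra hlt
  push_neg at hlt
  exact hx (T.mono v u hv.1.1 hlt.le h1 hv.2)

lemma tau_preimage {u : ℝ} (h0 : 0 ≤ u) (h1 : u < 1) : {x | T.tau x ≤ u} = T.D u := by
  apply Set.Subset.antisymm
  · intro x hx
    rw [T.right_cont u h0 h1]
    simp only [Set.mem_iInter]
    intro v hv
    have hlt : T.tau x < v := lt_of_le_of_lt hx hv.1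
    obtain ⟨w, hw, hwv⟩ := exists_lt_of_csInf_lt (tau_nonempty T x) hlt
    exact T.mono w v hw.1.1 hwv.le hv.2 hw.2
  · intro x hx
    exact tau_le T h0 h1.le hx

lemma tau_measurable : Measurable T.tau := by
  apply measurable_of_Iic
  intro u
  rcases lt_or_ge u 0 with h | h
  · have : T.tau ⁻¹' Iic u = ∅ := by
      ext x
      simp only [mem_preimage, mem_Iic, mem_empty_iff_false, iff_false, not_le]
      exact lt_of_lt_of_le h (le_csInf (tau_nonempty T x) fun v hv => hv.1.1)
    rw [this]; exact MeasurableSet.empty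
  · rcases lt_or_ge u 1 with h1 | h1
    · have : T.tau ⁻¹' Iic u = T.D u := tau_preimage T h h1
      rw [this]; exact measD T h h1.le
    · have : T.tau ⁻¹' Iic u = univ := by
        ext x
        simp only [mem_preimage, mem_Iic, mem_univ, iff_true]
        refine le_trans ?_ h1
        exact csInf_le (tau_bddBelow T x) ⟨⟨zero_le_one, le_rfl⟩, by rw [T.one_eq_univ]; trivial⟩
      rw [this]; exact MeasurableSet.univ

end Helpers

section Cont
set_option linter.unusedSectionVars false
set_option linter.unusedVariables false

variable {d : ℕ} {μ : Measure (Fin d → ℝ)} [IsProbabilityMeasure μ] (T : TrimmedFamily d μ)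
variable (ρ : Measure (Fin d → ℝ)) [IsFiniteMeasure ρ] (hρ : ρ ≪ μ)

open Helpers

lemma fmono : MonotoneOn (fun u => (ρ (T.D u)).toReal) (Icc (0:ℝ) 1) := by
  intro a ha b hb hab
  exact ENNReal.toReal_mono (measure_ne_top _ _) (measure_mono (T.mono a b ha.1 hab hb.2))

lemma fright {u : ℝ} (h0 : 0 < u) (h1 : u < 1) {ε : ℝ} (hε : 0 < ε) :
    ∃ v, u < v ∧ v < 1 ∧ (ρ (T.D v)).toReal ≤ (ρ (T.D u)).toReal + ε := by
  set w : ℕ → ℝ := fun n => u + (1 - u) / (n + 2) with hw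
  have hwpos : ∀ n : ℕ, 0 < (1 - u) / ((n:ℝ) + 2) := by
    intro n
    apply div_pos (by linarith) (by positivity)
  have hw_gt : ∀ n, u < w n := fun n => lt_add_of_pos_right u (hwpos n)
  have hw_lt : ∀ n, w n < 1 := by
    intro n
    have : (1 - u) / ((n:ℝ) + 2) < 1 - u := by
      have hn0 : (0:ℝ) ≤ (n:ℝ) := Nat.cast_nonneg n
      apply div_lt_self (by linarith) (by linarith)
    simp only [hw]; linarith
  have hw_anti : ∀ m n : ℕ, m ≤ n → w n ≤ w m := by
    intro m n hmn
    have : (1 - u) / ((n:ℝ) + 2) ≤ (1 - u) / ((m:ℝ) + 2) := by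
      have hmn' : (m:ℝ) ≤ (n:ℝ) := Nat.cast_le.mpr hmn
      apply div_le_div_of_nonneg_left (by linarith) (by positivity) (by linarith)
    simp only [hw]; linarith
  have hanti : Antitone (fun n : ℕ => T.D (w n)) := by
    intro m n hmn
    exact T.mono (w n) (w m) (le_of_lt (lt_trans h0 (hw_gt n))) (hw_anti m n hmn) (hw_lt m).le
  have hiInter : ⋂ n, T.D (w n) = T.D u := by
    apply Set.Subset.antisymm
    · rw [T.right_cont u h0.le h1]
      intro x hx
      simp only [Set.mem_iInter] at hx ⊢
      intro v hv
      -- find n with w n ≤ v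
      obtain ⟨n, hn⟩ := exists_nat_ge ((1 - u) / (v - u))
      have hvu : 0 < v - u := by linarith [hv.1]
      have hwn : w n ≤ v := by
        have h3 : (1 - u) / (v - u) ≤ (n:ℝ) + 2 := le_trans hn (by linarith)
        have h4 : 1 - u ≤ ((n:ℝ) + 2) * (v - u) := (div_le_iff₀ hvu).mp h3
        have h2 : (1 - u) / ((n:ℝ) + 2) ≤ v - u := by
          rw [div_le_iff₀ (by positivity)]
          linarith
        simp only [hw]; linarith
      exact T.mono (w n) v (le_of_lt (lt_trans h0 (hw_gt n))) hwn hv.2 (hx n)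
    · intro x hx
      simp only [Set.mem_iInter]
      intro n
      exact T.mono u (w n) h0.le (hw_gt n).le (hw_lt n).le hx
  have hmeas : ∀ n, NullMeasurableSet (T.D (w n)) ρ :=
    fun n => (measD T (le_of_lt (lt_trans h0 (hw_gt n))) (hw_lt n).le).nullMeasurableSet
  have htend : Tendsto (fun n => ρ (T.D (w n))) atTop (nhds (ρ (T.D u))) := by
    have := MeasureTheory.tendsto_measure_iInter_atTop hmeas hanti ⟨0, measure_ne_top _ _⟩
    rwa [hiInter] at this
  have htend' : Tendsto (fun n => (ρ (T.D (w n))).toReal) atTop (nhds ((ρ (T.D u)).toReal)) :=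
    (ENNReal.tendsto_toReal (measure_ne_top _ _)).comp htend
  have : ∀ᶠ n in atTop, (ρ (T.D (w n))).toReal < (ρ (T.D u)).toReal + ε :=
    htend'.eventually (Filter.Tendsto.eventually_lt_const (lt_add_of_pos_right _ hε) tendsto_id)
  obtain ⟨n, hn⟩ := this.exists
  exact ⟨w n, hw_gt n, hw_lt n, hn.le⟩

include hρ in
lemma fleft {u : ℝ} (h0 : 0 < u) (h1 : u ≤ 1) {ε : ℝ} (hε : 0 < ε) :
    ∃ v, 0 < v ∧ v < u ∧ (ρ (T.D u)).toReal ≤ (ρ (T.D v)).toReal + ε := by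
  set w : ℕ → ℝ := fun n => u - u / (n + 2) with hw
  have hwpos : ∀ n : ℕ, 0 < u / ((n:ℝ) + 2) := fun n => div_pos h0 (by positivity)
  have hw_lt : ∀ n, w n < u := fun n => sub_lt_self u (hwpos n)
  have hw_pos : ∀ n, 0 < w n := by
    intro n
    have hn0 : (0:ℝ) ≤ (n:ℝ) := Nat.cast_nonneg n
    have : u / ((n:ℝ) + 2) < u := div_lt_self h0 (by linarith)
    simp only [hw]; linarith
  have hw_mono : ∀ m n : ℕ, m ≤ n → w m ≤ w n := by
    intro m n hmn
    have : u / ((n:ℝ) + 2) ≤ u / ((m:ℝ) + 2) := by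
      have hmn' : (m:ℝ) ≤ (n:ℝ) := Nat.cast_le.mpr hmn
      apply div_le_div_of_nonneg_left h0.le (by positivity) (by linarith)
    simp only [hw]; linarith
  have hmono : Monotone (fun n : ℕ => T.D (w n)) := by
    intro m n hmn
    exact T.mono (w m) (w n) (hw_pos m).le (hw_mono m n hmn) (le_trans (hw_lt n).le h1)
  have hUsub : (⋃ v ∈ Ico (0:ℝ) u, T.D v) ⊆ ⋃ n, T.D (w n) := by
    intro x hx
    simp only [Set.mem_iUnion] at hx ⊢
    obtain ⟨v, hv, hxv⟩ := hx
    obtain ⟨n, hn⟩ := exists_nat_ge (u / (u - v))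
    have hvu : 0 < u - v := by
      simp only [Set.mem_Ico] at hv; linarith [hv.2]
    have hwn : v ≤ w n := by
      have h3 : u / (u - v) ≤ (n:ℝ) + 2 := le_trans hn (by linarith)
      have h4 : u ≤ ((n:ℝ) + 2) * (u - v) := (div_le_iff₀ hvu).mp h3
      have h2 : u / ((n:ℝ) + 2) ≤ u - v := by
        rw [div_le_iff₀ (by positivity)]
        linarith
      simp only [hw]; linarith
    simp only [Set.mem_Ico] at hv
    exact ⟨n, T.mono v (w n) hv.1 hwn (le_trans (hw_lt n).le h1) hxv⟩
  have hmeasU : ρ (T.D u) ≤ ρ (⋃ n, T.D (w n)) := by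
    have hnull : ρ (T.D u \ ⋃ v ∈ Ico (0:ℝ) u, T.D v) = 0 :=
      hρ (T.left_jump_null u h0 h1)
    calc ρ (T.D u) ≤ ρ ((⋃ n, T.D (w n)) ∪ (T.D u \ ⋃ v ∈ Ico (0:ℝ) u, T.D v)) := by
          apply measure_mono
          intro x hx
          by_cases hmem : x ∈ ⋃ v ∈ Ico (0:ℝ) u, T.D v
          · exact Or.inl (hUsub hmem)
          · exact Or.inr ⟨hx, hmem⟩
      _ ≤ ρ (⋃ n, T.D (w n)) + ρ (T.D u \ ⋃ v ∈ Ico (0:ℝ) u, T.D v) := measure_union_le _ _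
      _ = ρ (⋃ n, T.D (w n)) := by rw [hnull, add_zero]
  have hmeasU' : ρ (⋃ n, T.D (w n)) ≤ ρ (T.D u) := by
    apply measure_mono
    apply Set.iUnion_subset
    intro n
    exact T.mono (w n) u (hw_pos n).le (hw_lt n).le h1
  have hEq : ρ (⋃ n, T.D (w n)) = ρ (T.D u) := le_antisymm hmeasU' hmeasU
  have htend : Tendsto (fun n => ρ (T.D (w n))) atTop (nhds (ρ (T.D u))) := by
    have := MeasureTheory.tendsto_measure_iUnion_atTop (μ := ρ) hmono
    rwa [hEq] at this
  have htend' : Tendsto (fun n => (ρ (T.D (w n))).toReal) atTop (nhds ((ρ (T.D u)).toReal)) :=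
    (ENNReal.tendsto_toReal (measure_ne_top _ _)).comp htend
  have : ∀ᶠ n in atTop, (ρ (T.D u)).toReal - ε < (ρ (T.D (w n))).toReal :=
    htend'.eventually (Filter.Tendsto.eventually_const_lt (by linarith) tendsto_id)
  obtain ⟨n, hn⟩ := this.exists
  exact ⟨w n, hw_pos n, hw_lt n, by linarith⟩

include hρ in
lemma fcont : ContinuousOn (fun u => (ρ (T.D u)).toReal) (Ioo (0:ℝ) 1) := by
  intro u hu
  apply ContinuousWithinAt.mono (s := Ioo (0:ℝ) 1) ?_ (le_refl _)
  rw [Metric.continuousWithinAt_iff]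
  intro ε hε
  obtain ⟨v₂, hv₂u, hv₂1, hv₂⟩ := fright T ρ hu.1 hu.2 (half_pos hε)
  obtain ⟨v₁, hv₁0, hv₁u, hv₁⟩ := fleft T ρ hρ hu.1 hu.2.le (half_pos hε)
  refine ⟨min (v₂ - u) (u - v₁), by simp [hv₂u, hv₁u, sub_pos], ?_⟩
  intro v hv hdist
  rw [Real.dist_eq] at hdist ⊢
  set f := fun u => (ρ (T.D u)).toReal
  have hmem : ∀ z, z ∈ Ioo (0:ℝ) 1 → z ∈ Icc (0:ℝ) 1 := fun z hz => ⟨hz.1.le, hz.2.le⟩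
  have huI : u ∈ Icc (0:ℝ) 1 := hmem u hu
  have hvI : v ∈ Icc (0:ℝ) 1 := hmem v hv
  have hv₂I : v₂ ∈ Icc (0:ℝ) 1 := ⟨(lt_trans hu.1 hv₂u).le, hv₂1.le⟩
  have hv₁I : v₁ ∈ Icc (0:ℝ) 1 := ⟨hv₁0.le, (lt_trans hv₁u hu.2).le⟩
  have habs := abs_lt.mp hdist
  rcases le_or_gt u v with hc | hc
  · have hvv₂ : v ≤ v₂ := by
      have := habs.2
      have := min_le_left (v₂ - u) (u - v₁)
      linarith
    have h1 : f u ≤ f v := fmono T ρ huI hvI hc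
    have h2 : f v ≤ f v₂ := fmono T ρ hvI hv₂I hvv₂
    rw [abs_lt]; constructor <;> [linarith; linarith]
  · have hvv₁ : v₁ ≤ v := by
      have := habs.1
      have := min_le_right (v₂ - u) (u - v₁)
      linarith
    have h1 : f v ≤ f u := fmono T ρ hvI huI hc.le
    have h2 : f v₁ ≤ f v := fmono T ρ hv₁I hvI hvv₁
    rw [abs_lt]; constructor <;> [linarith; linarith]

end Cont

section WithG
set_option linter.unusedSectionVars false
set_option linter.unusedVariables false

open Helpers

variable {d : ℕ} {μ : Measure (Fin d → ℝ)} [IsProbabilityMeasure μ] (T : TrimmedFamily d μ)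
variable {g : (Fin d → ℝ) → ℝ}

lemma nu_apply (hg_meas : Measurable g) (hg_nonneg : ∀ x, 0 ≤ g x)
    {A : Set (Fin d → ℝ)} (hA : MeasurableSet A) :
    ((μ.withDensity fun x => ENNReal.ofReal (g x)) A).toReal = ∫ x in A, g x ∂μ := by
  rw [withDensity_apply _ hA,
    integral_eq_lintegral_of_nonneg_ae (ae_of_all _ hg_nonneg) hg_meas.aestronglyMeasurable]

lemma diff_toReal (ρ : Measure (Fin d → ℝ)) [IsFiniteMeasure ρ] {a b : ℝ}
    (h0 : 0 ≤ a) (hab : a ≤ b) (hb : b ≤ 1) :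
    (ρ (T.D b \ T.D a)).toReal = (ρ (T.D b)).toReal - (ρ (T.D a)).toReal := by
  have hsub : T.D a ⊆ T.D b := T.mono a b h0 hab hb
  have hmb : MeasurableSet (T.D b) := measD T (h0.trans hab) hb
  have hma : MeasurableSet (T.D a) := measD T h0 (hab.trans hb)
  have h : ρ (T.D a) + ρ (T.D b \ T.D a) = ρ (T.D b) := by
    rw [← measure_union disjoint_sdiff_self_right (hmb.diff hma), union_diff_cancel hsub]
  have := congrArg ENNReal.toReal h
  rw [ENNReal.toReal_add (measure_ne_top _ _) (measure_ne_top _ _)] at this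
  linarith

lemma muQ_pos {t : ℝ} (h0 : 0 ≤ t) (h1 : t < 1) : 0 < T.muQ t := by
  have hlt : μ (T.D t) < 1 := T.meas_lt_one t h0 h1
  have hQ : μ (T.Q t) ≠ 0 := by
    intro h
    have : (1:ENNReal) = μ ((T.D t) ∪ (T.D t)ᶜ) := by
      rw [Set.union_compl_self]; exact (measure_univ).symm
    have hle : (1:ENNReal) ≤ μ (T.D t) + μ (T.Q t) := this.le.trans (measure_union_le _ _)
    rw [h, add_zero] at hle
    exact absurd hlt (not_lt.mpr hle)
  exact ENNReal.toReal_pos hQ (measure_ne_top _ _)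

lemma muQ_eq {u : ℝ} (h0 : 0 ≤ u) (h1 : u ≤ 1) : T.muQ u = 1 - (μ (T.D u)).toReal := by
  unfold TrimmedFamily.muQ TrimmedFamily.Q
  rw [measure_compl (measD T h0 h1) (measure_ne_top _ _), measure_univ,
    ENNReal.toReal_sub_of_le prob_le_one ENNReal.one_ne_top, ENNReal.toReal_one]

end WithG

section Core
set_option linter.unusedSectionVars false
set_option linter.unusedVariables false
set_option maxHeartbeats 1000000

open Helpers

variable {d : ℕ} {μ : Measure (Fin d → ℝ)} [IsProbabilityMeasure μ] (T : TrimmedFamily d μ)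
variable {g : (Fin d → ℝ) → ℝ}

lemma core (hg_meas : Measurable g) (hg_nonneg : ∀ x, 0 ≤ g x) (hg_sq : MemLp g 2 μ)
    {s t : ℝ} (hs : 0 < s) (hst : s < t) (ht : t < 1) :
    ∫ x in T.D t \ T.D s, (g x - T.G g (T.tau x))^2 ∂μ
      = (∫ x in T.D t \ T.D s, g x^2 ∂μ) + T.muQ t * (T.G g t)^2 - T.muQ s * (T.G g s)^2 := by
  have ht0 : (0:ℝ) ≤ t := (hs.trans hst).le
  have hst' : s ≤ t := hst.le
  have hs1 : s ≤ 1 := (hst.trans ht).le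
  have hg_int : Integrable g μ := hg_sq.integrable one_le_two
  have hg2_int : Integrable (fun x => g x^2) μ := hg_sq.integrable_sq
  set ν := μ.withDensity (fun x => ENNReal.ofReal (g x)) with hνdef
  haveI hνfin : IsFiniteMeasure ν := isFiniteMeasure_withDensity hg_int.lintegral_lt_top.ne
  have hνac : ν ≪ μ := withDensity_absolutelyContinuous μ _
  set Ig : ℝ := ∫ x, g x ∂μ with hIgdef
  have hIg0 : 0 ≤ Ig := integral_nonneg hg_nonneg
  have hsubIcc : Icc s t ⊆ Icc (0:ℝ) 1 := fun u hu => ⟨hs.le.trans hu.1, hu.2.trans ht.le⟩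
  have hν_univ : (ν univ).toReal = Ig := by
    rw [nu_apply hg_meas hg_nonneg MeasurableSet.univ, Measure.restrict_univ]
  have hfn_le : ∀ u : ℝ, (ν (T.D u)).toReal ≤ Ig :=
    fun u => hν_univ ▸ ENNReal.toReal_mono (measure_ne_top _ _) (measure_mono (subset_univ _))
  have hfn0 : ∀ u : ℝ, 0 ≤ (ν (T.D u)).toReal := fun u => ENNReal.toReal_nonneg
  have hq_g : ∀ a b : ℝ, 0 ≤ a → a ≤ b → b ≤ 1 →
      ∫ x in T.D b \ T.D a, g x ∂μ = (ν (T.D b)).toReal - (ν (T.D a)).toReal := by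
    intro a b h0 hab hb1
    rw [← nu_apply hg_meas hg_nonneg ((measD T (h0.trans hab) hb1).diff (measD T h0 (hab.trans hb1)))]
    exact diff_toReal T ν h0 hab hb1
  have hH : ∀ u : ℝ, 0 ≤ u → u ≤ 1 → ∫ x in T.Q u, g x ∂μ = Ig - (ν (T.D u)).toReal := by
    intro u h0 h1
    have h2 := integral_add_compl (measD T h0 h1) hg_int
    have h3 : ∫ x in T.D u, g x ∂μ = (ν (T.D u)).toReal :=
      (nu_apply hg_meas hg_nonneg (measD T h0 h1)).symm
    have h4 : ∫ x in T.Q u, g x ∂μ = ∫ x in (T.D u)ᶜ, g x ∂μ := rfl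
    rw [h4]; rw [h3] at h2; linarith
  have hG : ∀ u : ℝ, 0 ≤ u → u ≤ 1 →
      T.G g u = (Ig - (ν (T.D u)).toReal) / T.muQ u := by
    intro u h0 h1
    unfold TrimmedFamily.G
    rw [hH u h0 h1]
  set m0 : ℝ := T.muQ t with hm0def
  have hm0 : 0 < m0 := muQ_pos T ht0 ht
  have hmuQ_ge : ∀ u ∈ Icc s t, m0 ≤ T.muQ u := by
    intro u hu
    rw [muQ_eq T (hsubIcc hu).1 (hsubIcc hu).2, hm0def, muQ_eq T ht0 ht.le]
    have h := fmono T μ (hsubIcc hu) ⟨ht0, ht.le⟩ hu.2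
    simp only [] at h
    linarith
  have hmuQ_le1 : ∀ u : ℝ, 0 ≤ u → u ≤ 1 → T.muQ u ≤ 1 := by
    intro u h0 h1
    rw [muQ_eq T h0 h1]
    have : (0:ℝ) ≤ (μ (T.D u)).toReal := ENNReal.toReal_nonneg
    linarith
  have hmuQ_pos' : ∀ u ∈ Icc s t, 0 < T.muQ u := fun u hu => lt_of_lt_of_le hm0 (hmuQ_ge u hu)
  set M : ℝ := Ig / m0 with hMdef
  have hM0 : 0 ≤ M := div_nonneg hIg0 hm0.le
  have hGb : ∀ u ∈ Icc s t, 0 ≤ T.G g u ∧ T.G g u ≤ M := by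
    intro u hu
    have h0 := (hsubIcc hu).1
    have h1 := (hsubIcc hu).2
    rw [hG u h0 h1]
    have hd0 : 0 < T.muQ u := hmuQ_pos' u hu
    have hnum1 : 0 ≤ Ig - (ν (T.D u)).toReal := by linarith [hfn_le u]
    refine ⟨div_nonneg hnum1 hd0.le, ?_⟩
    rw [hMdef]
    exact div_le_div₀ hIg0 (by linarith [hfn0 u]) hm0 (hmuQ_ge u hu)
  have hGH : ∀ u ∈ Icc s t, T.G g u * T.muQ u = Ig - (ν (T.D u)).toReal := by
    intro u hu
    rw [hG u (hsubIcc hu).1 (hsubIcc hu).2, div_mul_cancel₀ _ (ne_of_gt (hmuQ_pos' u hu))]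
  -- continuity of G on Icc s t
  have hIccsub : Icc s t ⊆ Ioo (0:ℝ) 1 :=
    fun u hu => ⟨lt_of_lt_of_le hs hu.1, lt_of_le_of_lt hu.2 ht⟩
  have hfmc : ContinuousOn (fun u : ℝ => (μ (T.D u)).toReal) (Icc s t) :=
    (fcont T μ Measure.AbsolutelyContinuous.rfl).mono hIccsub
  have hfnc : ContinuousOn (fun u : ℝ => (ν (T.D u)).toReal) (Icc s t) :=
    (fcont T ν hνac).mono hIccsub
  have hGcont : ContinuousOn (T.G g) (Icc s t) := by
    have h1 : ContinuousOn (fun u : ℝ => (Ig - (ν (T.D u)).toReal) / (1 - (μ (T.D u)).toReal))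
        (Icc s t) := by
      apply ContinuousOn.div (continuousOn_const.sub hfnc) (continuousOn_const.sub hfmc)
      intro u hu
      have h2 : T.muQ u = 1 - (μ (T.D u)).toReal := muQ_eq T (hsubIcc hu).1 (hsubIcc hu).2
      have h3 := hmuQ_pos' u hu
      show 1 - (μ (T.D u)).toReal ≠ 0
      rw [← h2]
      exact h3.ne'
    apply h1.congr
    intro u hu
    rw [hG u (hsubIcc hu).1 (hsubIcc hu).2, muQ_eq T (hsubIcc hu).1 (hsubIcc hu).2]
  have hunif : ∀ ε : ℝ, 0 < ε → ∃ δ : ℝ, 0 < δ ∧ ∀ u ∈ Icc s t, ∀ v ∈ Icc s t,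
      |u - v| ≤ δ → |T.G g u - T.G g v| ≤ ε := by
    have huc := isCompact_Icc.uniformContinuousOn_of_continuous hGcont
    rw [Metric.uniformContinuousOn_iff_le] at huc
    intro ε hε
    obtain ⟨δ, hδ, hδ'⟩ := huc ε hε
    refine ⟨δ, hδ, fun u hu v hv h => ?_⟩
    rw [← Real.dist_eq]
    exact hδ' u hu v hv (by rwa [Real.dist_eq])
  -- clamp and Gc
  set cl : ℝ → ℝ := fun u => max s (min u t) with hcldef
  have hcl_mem : ∀ u, cl u ∈ Icc s t := fun u => ⟨le_max_left _ _, max_le hst' (min_le_right _ _)⟩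
  have hcl_eq : ∀ u ∈ Icc s t, cl u = u := by
    intro u hu
    simp only [hcldef]
    rw [min_eq_left hu.2, max_eq_right hu.1]
  have hclc : Continuous cl := continuous_const.max (continuous_id.min continuous_const)
  set Gc : ℝ → ℝ := fun u => T.G g (cl u) with hGcdef
  have hGcc : Continuous Gc := hGcont.comp_continuous hclc hcl_mem
  have hGcmeas : Measurable fun x => Gc (T.tau x) := hGcc.measurable.comp (tau_measurable T)
  have hGc_eq : ∀ u ∈ Icc s t, Gc u = T.G g u := by
    intro u hu
    simp only [hGcdef]
    rw [hcl_eq u hu]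
  have hGcbd : ∀ u, 0 ≤ Gc u ∧ Gc u ≤ M := fun u => hGb _ (hcl_mem u)
  -- band and pieces
  have hmeas_ab : ∀ a b : ℝ, 0 ≤ a → a ≤ b → b ≤ 1 → MeasurableSet (T.D b \ T.D a) :=
    fun a b h0 hab hb => (measD T (h0.trans hab) hb).diff (measD T h0 (hab.trans hb))
  have hτ : ∀ a b : ℝ, s ≤ a → a ≤ b → b ≤ t → ∀ x ∈ T.D b \ T.D a, T.tau x ∈ Icc a b := by
    intro a b hsa hab hbt x hx
    exact ⟨le_tau T ((hab.trans hbt).trans ht.le) hx.2,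
      tau_le T (hs.le.trans (hsa.trans hab)) ((hbt.trans ht.le)) hx.1⟩
  set F : (Fin d → ℝ) → ℝ := fun x => Gc (T.tau x)^2 - 2 * Gc (T.tau x) * g x with hFdef
  have hF_int : ∀ A : Set (Fin d → ℝ), Integrable F (μ.restrict A) := by
    intro A
    apply Integrable.sub
    · apply Integrable.mono' (integrable_const (M^2))
        ((hGcmeas.pow_const 2).aestronglyMeasurable)
      apply ae_of_all
      intro x
      rw [Real.norm_eq_abs, abs_of_nonneg (sq_nonneg _)]
      have h := hGcbd (T.tau x)
      nlinarith [h.1, h.2]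
    · exact Integrable.bdd_mul (hg_int.restrict) ((hGcmeas.const_mul 2).aestronglyMeasurable)
        (c := 2*M) (ae_of_all _ fun x => by
          rw [Real.norm_eq_abs]
          have h := hGcbd (T.tau x)
          rw [abs_of_nonneg (by linarith [h.1])]
          linarith [h.2])
  set Φ : ℝ → ℝ := fun u => T.muQ u * (T.G g u)^2 with hΦdef
  -- exact piece identity
  have hq_ab : ∀ a b : ℝ, s ≤ a → a ≤ b → b ≤ t →
      ∫ x in T.D b \ T.D a, g x ∂μ = T.G g a * T.muQ a - T.G g b * T.muQ b := by
    intro a b hsa hab hbt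
    have haI : a ∈ Icc s t := ⟨hsa, hab.trans hbt⟩
    have hbI : b ∈ Icc s t := ⟨hsa.trans hab, hbt⟩
    rw [hq_g a b (hsubIcc haI).1 hab (hsubIcc hbI).2]
    have h1 := hGH a haI
    have h2 := hGH b hbI
    linarith
  have hp_ab : ∀ a b : ℝ, s ≤ a → a ≤ b → b ≤ t →
      (μ (T.D b \ T.D a)).toReal = T.muQ a - T.muQ b := by
    intro a b hsa hab hbt
    have haI : a ∈ Icc s t := ⟨hsa, hab.trans hbt⟩
    have hbI : b ∈ Icc s t := ⟨hsa.trans hab, hbt⟩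
    rw [diff_toReal T μ (hsubIcc haI).1 hab (hsubIcc hbI).2,
      muQ_eq T (hsubIcc haI).1 (hsubIcc haI).2, muQ_eq T (hsubIcc hbI).1 (hsubIcc hbI).2]
    ring
  have hpiece : ∀ a b : ℝ, s ≤ a → a ≤ b → b ≤ t →
      Φ b - Φ a = (∫ x in T.D b \ T.D a, ((T.G g a)^2 - 2 * T.G g a * g x) ∂μ)
        + T.muQ b * (T.G g b - T.G g a)^2 := by
    intro a b hsa hab hbt
    have haI : a ∈ Icc s t := ⟨hsa, hab.trans hbt⟩
    have hbI : b ∈ Icc s t := ⟨hsa.trans hab, hbt⟩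
    have hconst_int : Integrable (fun _ : Fin d → ℝ => (T.G g a)^2)
        (μ.restrict (T.D b \ T.D a)) := integrable_const _
    have hgr : Integrable (fun x => 2 * T.G g a * g x) (μ.restrict (T.D b \ T.D a)) :=
      (hg_int.restrict).const_mul _
    rw [integral_sub hconst_int hgr, integral_const, integral_const_mul _ _, hq_ab a b hsa hab hbt,
      measureReal_restrict_apply_univ, measureReal_def, hp_ab a b hsa hab hbt, smul_eq_mul]
    simp only [hΦdef]
    ring
  -- per-piece error estimate
  have herr : ∀ ε : ℝ, 0 < ε → ∀ δ : ℝ, 0 < δ →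
      (∀ u ∈ Icc s t, ∀ v ∈ Icc s t, |u - v| ≤ δ → |T.G g u - T.G g v| ≤ ε) →
      ∀ a b : ℝ, s ≤ a → a ≤ b → b ≤ t → b - a ≤ δ →
      |(∫ x in T.D b \ T.D a, F x ∂μ) - (Φ b - Φ a)|
        ≤ ε * (2*M + M/m0) * (T.muQ a - T.muQ b)
          + ε * (2 + 1/m0) * (∫ x in T.D b \ T.D a, g x ∂μ) := by
    intro ε hε δ hδ hδ' a b hsa hab hbt hba
    have haI : a ∈ Icc s t := ⟨hsa, hab.trans hbt⟩
    have hbI : b ∈ Icc s t := ⟨hsa.trans hab, hbt⟩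
    have hPmeas : MeasurableSet (T.D b \ T.D a) :=
      hmeas_ab a b (hs.le.trans hsa) hab (hbt.trans ht.le)
    set Ga := T.G g a with hGadef
    set Gb := T.G g b with hGbdef
    set q : ℝ := ∫ x in T.D b \ T.D a, g x ∂μ with hqdef
    have hq0 : 0 ≤ q := setIntegral_nonneg hPmeas (fun x _ => hg_nonneg x)
    set p : ℝ := T.muQ a - T.muQ b with hpdef
    have hp0 : 0 ≤ p := by
      rw [hpdef, ← hp_ab a b hsa hab hbt]
      exact ENNReal.toReal_nonneg
    -- bound on |Gb - Ga|
    have hΔε : |Gb - Ga| ≤ ε := by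
      apply hδ' b hbI a haI
      rw [abs_of_nonneg (by linarith)]
      linarith
    have hA : m0 ≤ T.muQ a := hmuQ_ge a haI
    have hGbM := hGb b hbI
    have hGaM := hGb a haI
    have hΔ2 : |Gb - Ga| ≤ (q + M * p) / m0 := by
      have hqe : q = Ga * T.muQ a - Gb * T.muQ b := hq_ab a b hsa hab hbt
      have hid : Gb - Ga = (-q + Gb * p) / T.muQ a := by
        rw [eq_div_iff (ne_of_gt (hmuQ_pos' a haI)), hqe, hpdef]
        ring
      rw [hid, abs_div, abs_of_pos (hmuQ_pos' a haI)]
      apply div_le_div₀ (by positivity) ?_ hm0 hA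
      calc |(-q + Gb * p)| ≤ |(-q)| + |Gb * p| := abs_add_le _ _
        _ = q + Gb * p := by
            rw [abs_neg, abs_of_nonneg hq0, abs_of_nonneg (mul_nonneg hGbM.1 hp0)]
        _ ≤ q + M * p := by nlinarith [hGbM.2, hp0]
    -- main integral bound
    have hsplit : (∫ x in T.D b \ T.D a, F x ∂μ) - (Φ b - Φ a)
        = (∫ x in T.D b \ T.D a, (F x - (Ga^2 - 2 * Ga * g x)) ∂μ) - T.muQ b * (Gb - Ga)^2 := by
      have hint2 : Integrable (fun x => Ga^2 - 2 * Ga * g x) (μ.restrict (T.D b \ T.D a)) := by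
        apply Integrable.sub (integrable_const _) ((hg_int.restrict).const_mul _)
      rw [hpiece a b hsa hab hbt, integral_sub (hF_int _) hint2]
      ring
    have hbound1 : |∫ x in T.D b \ T.D a, (F x - (Ga^2 - 2 * Ga * g x)) ∂μ|
        ≤ ε * (2*M) * p + 2 * ε * q := by
      have hb_int : Integrable (fun x => ε * (2*M) + 2 * ε * g x)
          (μ.restrict (T.D b \ T.D a)) :=
        (integrable_const _).add ((hg_int.restrict).const_mul _)
      have hptw : ∀ᵐ x ∂(μ.restrict (T.D b \ T.D a)),
          ‖F x - (Ga^2 - 2 * Ga * g x)‖ ≤ ε * (2*M) + 2 * ε * g x := by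
        rw [ae_restrict_iff' hPmeas]
        apply ae_of_all
        intro x hx
        have hτx : T.tau x ∈ Icc a b := hτ a b hsa hab hbt x hx
        have hτI : T.tau x ∈ Icc s t := ⟨hsa.trans hτx.1, hτx.2.trans hbt⟩
        set G' := Gc (T.tau x) with hG'def
        have hG'bd := hGcbd (T.tau x)
        have hG'e : |G' - Ga| ≤ ε := by
          rw [hG'def, hGc_eq _ hτI]
          apply hδ' _ hτI _ haI
          rw [abs_of_nonneg (by linarith [hτx.1])]
          linarith [hτx.2]
        rw [Real.norm_eq_abs]
        have hgx := hg_nonneg x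
        have hexp : F x - (Ga^2 - 2 * Ga * g x)
            = (G' - Ga) * (G' + Ga) - 2 * (G' - Ga) * g x := by
          simp only [hFdef, hG'def]
          ring
        rw [hexp]
        calc |(G' - Ga) * (G' + Ga) - 2 * (G' - Ga) * g x|
            ≤ |(G' - Ga) * (G' + Ga)| + |2 * (G' - Ga) * g x| := abs_sub _ _
          _ = |G' - Ga| * |G' + Ga| + 2 * |G' - Ga| * g x := by
              rw [abs_mul, abs_mul, abs_mul, abs_of_nonneg hgx]
              norm_num
          _ ≤ ε * (2*M) + 2 * ε * g x := by
              have h1 : |G' + Ga| ≤ 2*M := by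
                rw [abs_of_nonneg (by linarith [hG'bd.1, hGaM.1])]
                linarith [hG'bd.2, hGaM.2]
              have h2 : 0 ≤ |G' + Ga| := abs_nonneg _
              have h3 : 0 ≤ |G' - Ga| := abs_nonneg _
              nlinarith
      have := norm_integral_le_of_norm_le hb_int hptw
      rw [Real.norm_eq_abs] at this
      refine le_trans this ?_
      rw [integral_add (integrable_const _) ((hg_int.restrict).const_mul _), integral_const,
        measureReal_restrict_apply_univ, measureReal_def, hp_ab a b hsa hab hbt, integral_const_mul _ _, smul_eq_mul]
      rw [← hpdef, ← hqdef]
      apply le_of_eq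
      ring
    have hbound2 : T.muQ b * (Gb - Ga)^2 ≤ ε * ((q + M * p) / m0) := by
      have h1 : T.muQ b ≤ 1 := hmuQ_le1 b (hsubIcc hbI).1 (hsubIcc hbI).2
      have h2 : (Gb - Ga)^2 ≤ ε * |Gb - Ga| := by
        have : (Gb - Ga)^2 = |Gb - Ga| * |Gb - Ga| := by
          rw [← abs_mul, abs_of_nonneg (by nlinarith)]
          ring
        rw [this]
        exact mul_le_mul_of_nonneg_right hΔε (abs_nonneg _)
      have h3 : 0 ≤ (Gb - Ga)^2 := sq_nonneg _
      have h4 : T.muQ b * (Gb - Ga)^2 ≤ (Gb - Ga)^2 := by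
        nlinarith [hmuQ_pos' b hbI]
      calc T.muQ b * (Gb - Ga)^2 ≤ (Gb - Ga)^2 := h4
        _ ≤ ε * |Gb - Ga| := h2
        _ ≤ ε * ((q + M * p) / m0) := mul_le_mul_of_nonneg_left hΔ2 hε.le
    calc |(∫ x in T.D b \ T.D a, F x ∂μ) - (Φ b - Φ a)|
        = |(∫ x in T.D b \ T.D a, (F x - (Ga^2 - 2 * Ga * g x)) ∂μ) - T.muQ b * (Gb - Ga)^2| := by
          rw [hsplit]
      _ ≤ |∫ x in T.D b \ T.D a, (F x - (Ga^2 - 2 * Ga * g x)) ∂μ| + T.muQ b * (Gb - Ga)^2 := by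
          have := abs_sub (∫ x in T.D b \ T.D a, (F x - (Ga^2 - 2 * Ga * g x)) ∂μ)
            (T.muQ b * (Gb - Ga)^2)
          have h0 : |T.muQ b * (Gb - Ga)^2| = T.muQ b * (Gb - Ga)^2 :=
            abs_of_nonneg (mul_nonneg (hmuQ_pos' b hbI).le (sq_nonneg _))
          rw [h0] at this
          exact this
      _ ≤ (ε * (2*M) * p + 2 * ε * q) + ε * ((q + M * p) / m0) := add_le_add hbound1 hbound2
      _ ≤ ε * (2*M + M/m0) * (T.muQ a - T.muQ b) + ε * (2 + 1/m0) * q := by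
          rw [← hpdef]
          apply le_of_eq
          field_simp
          ring
  -- partition limit
  set K : ℝ := (2*M + M/m0) + (2 + 1/m0) * Ig with hKdef
  have hdiv1 : 0 ≤ M/m0 := div_nonneg hM0 hm0.le
  have hdiv2 : 0 < 1/m0 := by positivity
  have hK0 : 0 ≤ K := by
    rw [hKdef]
    nlinarith [mul_nonneg hdiv2.le hIg0, hdiv1, hM0, hIg0]
  have hband_g_le : ∫ x in T.D t \ T.D s, g x ∂μ ≤ Ig :=
    setIntegral_le_integral hg_int (ae_of_all _ hg_nonneg)
  have hsuf : ∀ ε : ℝ, 0 < ε → |(∫ x in T.D t \ T.D s, F x ∂μ) - (Φ t - Φ s)| ≤ ε * K := by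
    intro ε hε
    obtain ⟨δ, hδ0, hδ⟩ := hunif ε hε
    set n : ℕ := max 1 ⌈(t - s)/δ⌉₊ with hndef
    have hn1 : 1 ≤ n := le_max_left _ _
    have hn0 : (0:ℝ) < (n:ℝ) := by exact_mod_cast Nat.lt_of_lt_of_le Nat.zero_lt_one hn1
    have hnδ : (t - s)/(n:ℝ) ≤ δ := by
      have h1 : (t - s)/δ ≤ (⌈(t - s)/δ⌉₊ : ℝ) := Nat.le_ceil _
      have h2 : ((⌈(t - s)/δ⌉₊ : ℕ) : ℝ) ≤ (n:ℝ) := by exact_mod_cast le_max_right 1 ⌈(t - s)/δ⌉₊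
      have h3 : (t - s)/δ ≤ (n:ℝ) := le_trans h1 h2
      rw [div_le_iff₀ hδ0] at h3
      rw [div_le_iff₀ hn0]
      linarith
    set step : ℝ := (t - s)/(n:ℝ) with hstepdef
    have hstep0 : 0 ≤ step := div_nonneg (by linarith) hn0.le
    set u : ℕ → ℝ := fun i => s + (i:ℝ) * step with hudef
    have hu0 : u 0 = s := by simp [hudef]
    have hun : u n = t := by
      simp only [hudef, hstepdef]
      field_simp
      ring
    have humono : ∀ i : ℕ, u i ≤ u (i+1) := by
      intro i
      simp only [hudef]
      push_cast
      nlinarith [hstep0]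
    have husub : ∀ i : ℕ, u (i+1) - u i = step := by
      intro i
      simp only [hudef]
      push_cast
      ring
    have humem : ∀ i : ℕ, i ≤ n → u i ∈ Icc s t := by
      intro i hi
      constructor
      · simp only [hudef]
        nlinarith [mul_nonneg (show (0:ℝ) ≤ (i:ℝ) from Nat.cast_nonneg i) hstep0]
      · have h1 : (i:ℝ) * step ≤ (n:ℝ) * step := by
          apply mul_le_mul_of_nonneg_right _ hstep0
          exact_mod_cast hi
        have h2 : (n:ℝ) * step = t - s := by
          rw [hstepdef]
          field_simp
        simp only [hudef]
        linarith
    have hcover : ∀ k : ℕ, k ≤ n →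
        T.D (u k) \ T.D (u 0) = ⋃ i ∈ Finset.range k, (T.D (u (i+1)) \ T.D (u i)) := by
      intro k
      induction k with
      | zero => intro _; simp
      | succ k ih =>
        intro hk
        have hk' : k ≤ n := Nat.le_of_succ_le hk
        rw [Finset.range_add_one, Finset.set_biUnion_insert, ← ih hk']
        have hsub1 : T.D (u k) ⊆ T.D (u (k+1)) :=
          T.mono (u k) (u (k+1)) (hs.le.trans (humem k hk').1) (humono k)
            ((humem (k+1) hk).2.trans ht.le)
        have hsub2 : T.D (u 0) ⊆ T.D (u k) := by
          rw [hu0]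
          exact T.mono s (u k) hs.le (humem k hk').1 ((humem k hk').2.trans ht.le)
        exact (Set.diff_union_diff_cancel hsub1 hsub2).symm
    have hbandcover : T.D t \ T.D s = ⋃ i ∈ Finset.range n, (T.D (u (i+1)) \ T.D (u i)) := by
      have h := hcover n le_rfl
      rwa [hu0, hun] at h
    have hPmeas : ∀ i ∈ Finset.range n, MeasurableSet (T.D (u (i+1)) \ T.D (u i)) := by
      intro i hi
      rw [Finset.mem_range] at hi
      exact hmeas_ab (u i) (u (i+1)) (hs.le.trans (humem i hi.le).1) (humono i)
        ((humem (i+1) hi).2.trans ht.le)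
    have hdisj : (↑(Finset.range n) : Set ℕ).Pairwise
        (Function.onFun Disjoint fun i => T.D (u (i+1)) \ T.D (u i)) := by
      have humono2 : ∀ a b : ℕ, a ≤ b → b ≤ n → T.D (u a) ⊆ T.D (u b) := by
        intro a b hab hbn
        apply T.mono (u a) (u b) (hs.le.trans (humem a (hab.trans hbn)).1) _
          ((humem b hbn).2.trans ht.le)
        simp only [hudef]
        have hab' : (a:ℝ) ≤ (b:ℝ) := by exact_mod_cast hab
        nlinarith [hstep0]
      have key : ∀ i j : ℕ, i < j → j < n →
          Disjoint (T.D (u (i+1)) \ T.D (u i)) (T.D (u (j+1)) \ T.D (u j)) := by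
        intro i j hij hjn
        rw [Set.disjoint_left]
        intro x hxi hxj
        exact hxj.2 (humono2 (i+1) j hij hjn.le hxi.1)
      intro i hi j hj hij
      simp only [Finset.coe_range, Set.mem_Iio] at hi hj
      rcases lt_or_gt_of_ne hij with h | h
      · exact key i j h hj
      · exact (key j i h hi).symm
    have hsum_int : ∫ x in T.D t \ T.D s, F x ∂μ
        = ∑ i ∈ Finset.range n, ∫ x in T.D (u (i+1)) \ T.D (u i), F x ∂μ := by
      rw [hbandcover]
      exact integral_biUnion_finset _ hPmeas hdisj (fun i _ => hF_int _)
    have hsum_g : ∫ x in T.D t \ T.D s, g x ∂μ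
        = ∑ i ∈ Finset.range n, ∫ x in T.D (u (i+1)) \ T.D (u i), g x ∂μ := by
      rw [hbandcover]
      exact integral_biUnion_finset _ hPmeas hdisj (fun i _ => hg_int.restrict)
    have hsum_Φ : Φ t - Φ s = ∑ i ∈ Finset.range n, (Φ (u (i+1)) - Φ (u i)) := by
      rw [Finset.sum_range_sub (fun i => Φ (u i)) n, hu0, hun]
    have hsum_p : ∑ i ∈ Finset.range n, (T.muQ (u i) - T.muQ (u (i+1))) = T.muQ s - T.muQ t := by
      rw [Finset.sum_range_sub' (fun i => T.muQ (u i)) n, hu0, hun]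
    calc |(∫ x in T.D t \ T.D s, F x ∂μ) - (Φ t - Φ s)|
        = |∑ i ∈ Finset.range n, ((∫ x in T.D (u (i+1)) \ T.D (u i), F x ∂μ)
            - (Φ (u (i+1)) - Φ (u i)))| := by
          rw [hsum_int, hsum_Φ]
          congr 1
          simp [Finset.sum_sub_distrib]
      _ ≤ ∑ i ∈ Finset.range n, |(∫ x in T.D (u (i+1)) \ T.D (u i), F x ∂μ)
            - (Φ (u (i+1)) - Φ (u i))| := Finset.abs_sum_le_sum_abs _ _
      _ ≤ ∑ i ∈ Finset.range n, (ε * (2*M + M/m0) * (T.muQ (u i) - T.muQ (u (i+1)))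
            + ε * (2 + 1/m0) * (∫ x in T.D (u (i+1)) \ T.D (u i), g x ∂μ)) := by
          apply Finset.sum_le_sum
          intro i hi
          rw [Finset.mem_range] at hi
          apply herr ε hε δ hδ0 hδ (u i) (u (i+1)) (humem i hi.le).1 (humono i) (humem (i+1) hi).2
          calc u (i+1) - u i = step := husub i
            _ ≤ δ := hnδ
      _ = ε * (2*M + M/m0) * (T.muQ s - T.muQ t)
            + ε * (2 + 1/m0) * (∫ x in T.D t \ T.D s, g x ∂μ) := by
          rw [Finset.sum_add_distrib, ← Finset.mul_sum, ← Finset.mul_sum, hsum_p, ← hsum_g]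
      _ ≤ ε * K := by
          have h1 : T.muQ s - T.muQ t ≤ 1 := by
            have h1a := hmuQ_le1 s hs.le hs1
            linarith [hm0]
          have hc1 : 0 ≤ ε * (2*M + M/m0) := mul_nonneg hε.le (by linarith)
          have hc2 : 0 ≤ ε * (2 + 1/m0) := mul_nonneg hε.le (by linarith)
          have e1 : ε * (2*M + M/m0) * (T.muQ s - T.muQ t) ≤ ε * (2*M + M/m0) * 1 :=
            mul_le_mul_of_nonneg_left h1 hc1
          have e2 : ε * (2 + 1/m0) * (∫ x in T.D t \ T.D s, g x ∂μ)
              ≤ ε * (2 + 1/m0) * Ig := mul_le_mul_of_nonneg_left hband_g_le hc2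
          have e3 : ε * (2*M + M/m0) * 1 + ε * (2 + 1/m0) * Ig = ε * K := by
            rw [hKdef]
            ring
          linarith
  have habs : |(∫ x in T.D t \ T.D s, F x ∂μ) - (Φ t - Φ s)| ≤ 0 := by
    apply le_of_forall_pos_le_add
    intro ε hε
    have hK1 : (0:ℝ) < K + 1 := by linarith
    have h1 := hsuf (ε/(K+1)) (div_pos hε hK1)
    have h2 : (ε/(K+1))*K ≤ ε := by
      rw [div_mul_eq_mul_div, div_le_iff₀ hK1]
      nlinarith
    linarith
  have hzero : (∫ x in T.D t \ T.D s, F x ∂μ) - (Φ t - Φ s) = 0 := abs_nonpos_iff.mp habs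
  have hfin : ∫ x in T.D t \ T.D s, F x ∂μ = Φ t - Φ s := by linarith
  have hsq_congr : ∫ x in T.D t \ T.D s, (g x - T.G g (T.tau x))^2 ∂μ
      = ∫ x in T.D t \ T.D s, (g x^2 + F x) ∂μ := by
    apply setIntegral_congr_fun (hmeas_ab s t hs.le hst' ht.le)
    intro x hx
    have hmem : T.tau x ∈ Icc s t := hτ s t le_rfl hst' le_rfl x hx
    show (g x - T.G g (T.tau x))^2 = g x^2 + F x
    rw [← hGc_eq _ hmem]
    simp only [hFdef]
    ring
  rw [hsq_congr, integral_add (hg2_int.restrict) (hF_int _), hfin]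
  ring

end Core

section Alpha
set_option linter.unusedSectionVars false
set_option linter.unusedVariables false

variable {d : ℕ} {μ : Measure (Fin d → ℝ)}

lemma alpha_const {Qs : Set (Fin d → ℝ)} (hQs : μ Qs ≠ 0)
    (α : (Fin d → ℝ) → ℝ) (C : ℝ) (hC : ∀ x, |α x| ≤ C)
    (hα_meas : Measurable[trimmedMS μ Qs] α) :
    ∃ c : ℝ, ∀ᵐ x ∂μ, x ∈ Qs → α x = c := by
  have hset : ∀ q : ℚ, MeasurableSet (α ⁻¹' Iic (q:ℝ))
      ∧ (μ ((α ⁻¹' Iic (q:ℝ)) ∩ Qs) = 0 ∨ μ (Qs \ (α ⁻¹' Iic (q:ℝ))) = 0) :=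
    fun q => hα_meas measurableSet_Iic
  set S : Set ℚ := {q | μ (Qs \ (α ⁻¹' Iic (q:ℝ))) = 0} with hSdef
  obtain ⟨q0, hq0gt⟩ := exists_rat_gt C
  have hq0S : q0 ∈ S := by
    have hempty : Qs \ (α ⁻¹' Iic ((q0:ℚ):ℝ)) = ∅ := by
      apply eq_empty_iff_forall_notMem.mpr
      intro x hx
      apply hx.2
      have h1 : α x ≤ C := le_trans (le_abs_self _) (hC x)
      exact le_of_lt (lt_of_le_of_lt h1 hq0gt)
    show μ (Qs \ (α ⁻¹' Iic ((q0:ℚ):ℝ))) = 0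
    rw [hempty]
    exact measure_empty
  have hSbdd : BddBelow ((fun q : ℚ => (q:ℝ)) '' S) := by
    refine ⟨-C - 1, ?_⟩
    rintro x ⟨q, hq, rfl⟩
    by_contra hlt
    push_neg at hlt
    have hempty : (α ⁻¹' Iic ((q:ℚ):ℝ)) = ∅ := by
      apply eq_empty_iff_forall_notMem.mpr
      intro y hy
      have h1 : -C ≤ α y := neg_le_of_abs_le (hC y)
      have h2 : α y ≤ (q:ℝ) := hy
      linarith
    have h3 : μ (Qs \ (α ⁻¹' Iic ((q:ℚ):ℝ))) = 0 := hq
    rw [hempty, diff_empty] at h3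
    exact hQs h3
  set c : ℝ := sInf ((fun q : ℚ => (q:ℝ)) '' S) with hcdef
  have himg_ne : ((fun q : ℚ => (q:ℝ)) '' S).Nonempty := ⟨(q0:ℝ), q0, hq0S, rfl⟩
  have hub : ∀ᵐ x ∂μ, x ∈ Qs → α x ≤ c := by
    have hcount : S.Countable := Set.to_countable S
    have h1 : ∀ᵐ x ∂μ, ∀ q ∈ S, x ∈ Qs → α x ≤ (q:ℝ) := by
      rw [MeasureTheory.ae_ball_iff hcount]
      intro q hq
      rw [MeasureTheory.ae_iff]
      apply measure_mono_null _ hq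
      intro x hx
      simp only [Set.mem_setOf_eq] at hx
      push_neg at hx
      exact ⟨hx.1, fun hmem => absurd hmem (not_le.mpr hx.2)⟩
    filter_upwards [h1] with x hx hxQ
    apply le_csInf himg_ne
    rintro y ⟨q, hq, rfl⟩
    exact hx q hq hxQ
  have hlb : ∀ᵐ x ∂μ, x ∈ Qs → c ≤ α x := by
    set S' : Set ℚ := {q | (q:ℝ) < c} with hS'def
    have hcount : S'.Countable := Set.to_countable _
    have h1 : ∀ᵐ x ∂μ, ∀ q ∈ S', x ∈ Qs → (q:ℝ) < α x := by
      rw [MeasureTheory.ae_ball_iff hcount]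
      intro q hq
      have hq' : (q:ℝ) < c := hq
      have hqnS : q ∉ S := fun hmem => absurd (csInf_le hSbdd ⟨q, hmem, rfl⟩) (not_le.mpr hq')
      have hnull : μ ((α ⁻¹' Iic (q:ℝ)) ∩ Qs) = 0 := (hset q).2.resolve_right hqnS
      rw [MeasureTheory.ae_iff]
      apply measure_mono_null _ hnull
      intro x hx
      simp only [Set.mem_setOf_eq] at hx
      push_neg at hx
      exact ⟨hx.2, hx.1⟩
    filter_upwards [h1] with x hx hxQ
    by_contra hlt
    push_neg at hlt
    obtain ⟨q, hq1, hq2⟩ := exists_rat_btwn hlt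
    exact absurd (hx q hq2 hxQ) (not_lt.mpr hq1.le)
  refine ⟨c, ?_⟩
  filter_upwards [hub, hlb] with x h1 h2 hxQ
  exact le_antisymm (h1 hxQ) (h2 hxQ)

end Alpha

/-- **Lemma 1.** For `0 < s < t < 1` and every bounded `F_s`-measurable `α`,
`∫ α (g_t² − g_s²) dμ = ∫_{D_t \ D_s} α(x) (g(x) − G_{τ(x)})² μ(dx)`, where
`g_u = g` on `D_u` and `g_u = G_u` on `Q_u` is a version of `E_μ[g | F_u]`. -/
theorem integral_bracket_increment
    {d : ℕ} (μ : Measure (Fin d → ℝ)) [IsProbabilityMeasure μ]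
    (T : TrimmedFamily d μ) (g : (Fin d → ℝ) → ℝ)
    (hg_meas : Measurable g) (hg_nonneg : ∀ x, 0 ≤ g x) (hg_sq : MemLp g 2 μ)
    (gt : ℝ → (Fin d → ℝ) → ℝ)
    (hgt : ∀ u : ℝ, ∀ x, gt u x = (T.D u).indicator g x + (T.Q u).indicator (fun _ => T.G g u) x)
    (s t : ℝ) (hs : 0 < s) (hst : s < t) (ht : t < 1)
    (α : (Fin d → ℝ) → ℝ) (hα_bdd : ∃ C, ∀ x, |α x| ≤ C)
    (hα_meas : Measurable[trimmedMS μ (T.Q s)] α) :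
    ∫ x, α x * ((gt t x) ^ 2 - (gt s x) ^ 2) ∂μ
      = ∫ x in T.D t \ T.D s, α x * (g x - T.G g (T.tau x)) ^ 2 ∂μ := by
  have ht0 : (0:ℝ) ≤ t := (hs.trans hst).le
  have hs1 : s ≤ 1 := (hst.trans ht).le
  have hst' : s ≤ t := hst.le
  have hg_int : Integrable g μ := hg_sq.integrable one_le_two
  have hg2_int : Integrable (fun x => g x ^ 2) μ := hg_sq.integrable_sq
  obtain ⟨C, hC⟩ := hα_bdd
  have hle : trimmedMS μ (T.Q s) ≤ (inferInstance : MeasurableSpace (Fin d → ℝ)) :=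
    fun A hA => hA.1
  have hα_borel : Measurable α := hα_meas.mono hle le_rfl
  have hQs0 : μ (T.Q s) ≠ 0 := by
    have h := muQ_pos T hs.le (hst.trans ht)
    intro h0
    rw [TrimmedFamily.muQ, h0] at h
    simp at h
  obtain ⟨c, hc⟩ := alpha_const hQs0 α C hC hα_meas
  have hDs_meas : MeasurableSet (T.D s) := Helpers.measD T hs.le hs1
  have hDt_meas : MeasurableSet (T.D t) := Helpers.measD T ht0 ht.le
  have hband_meas : MeasurableSet (T.D t \ T.D s) := hDt_meas.diff hDs_meas
  have hsubst : T.D s ⊆ T.D t := T.mono s t hs.le hst' ht.le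
  have hgt_mem : ∀ u x, x ∈ T.D u → gt u x = g x := by
    intro u x hx
    have hnot : x ∉ T.Q u := fun h => h hx
    rw [hgt u x, Set.indicator_of_mem hx, Set.indicator_of_notMem hnot, add_zero]
  have hgt_not : ∀ u x, x ∉ T.D u → gt u x = T.G g u := by
    intro u x hx
    have hmem : x ∈ T.Q u := hx
    rw [hgt u x, Set.indicator_of_notMem hx, Set.indicator_of_mem hmem, zero_add]
  have hgtsq_int : ∀ u, 0 ≤ u → u ≤ 1 → Integrable (fun x => (gt u x) ^ 2) μ := by
    intro u h0 h1
    have heq : (fun x => (gt u x) ^ 2)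
        = fun x => (T.D u).indicator (fun y => g y ^ 2) x
            + (T.Q u).indicator (fun _ => (T.G g u) ^ 2) x := by
      ext x
      by_cases hx : x ∈ T.D u
      · rw [hgt_mem u x hx, Set.indicator_of_mem hx,
          Set.indicator_of_notMem (fun h => h hx : x ∉ T.Q u), add_zero]
      · rw [hgt_not u x hx, Set.indicator_of_notMem hx,
          Set.indicator_of_mem (show x ∈ T.Q u from hx), zero_add]
    rw [heq]
    exact (hg2_int.indicator (Helpers.measD T h0 h1)).add
      ((integrable_const _).indicator (Helpers.measD T h0 h1).compl)
  have hh_int : Integrable (fun x => (gt t x) ^ 2 - (gt s x) ^ 2) μ :=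
    (hgtsq_int t ht0 ht.le).sub (hgtsq_int s hs.le hs1)
  have hF0_int : Integrable (fun x => α x * ((gt t x) ^ 2 - (gt s x) ^ 2)) μ :=
    hh_int.bdd_mul hα_borel.aestronglyMeasurable
      (c := C) (ae_of_all _ fun x => by rw [Real.norm_eq_abs]; exact hC x)
  have hsplit1 : (∫ x in T.D t, α x * ((gt t x) ^ 2 - (gt s x) ^ 2) ∂μ)
      + (∫ x in (T.D t)ᶜ, α x * ((gt t x) ^ 2 - (gt s x) ^ 2) ∂μ)
      = ∫ x, α x * ((gt t x) ^ 2 - (gt s x) ^ 2) ∂μ :=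
    integral_add_compl hDt_meas hF0_int
  have hDt_split : ∫ x in T.D t, α x * ((gt t x) ^ 2 - (gt s x) ^ 2) ∂μ
      = (∫ x in T.D s, α x * ((gt t x) ^ 2 - (gt s x) ^ 2) ∂μ)
        + ∫ x in T.D t \ T.D s, α x * ((gt t x) ^ 2 - (gt s x) ^ 2) ∂μ := by
    have h := setIntegral_union (f := fun x => α x * ((gt t x) ^ 2 - (gt s x) ^ 2)) (μ := μ)
      disjoint_sdiff_self_right hband_meas hF0_int.integrableOn hF0_int.integrableOn
    rwa [union_diff_cancel hsubst] at h
  have hDs0 : ∫ x in T.D s, α x * ((gt t x) ^ 2 - (gt s x) ^ 2) ∂μ = 0 := by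
    have hEq : EqOn (fun x => α x * ((gt t x) ^ 2 - (gt s x) ^ 2)) (fun _ => (0:ℝ)) (T.D s) := by
      intro x hx
      show α x * ((gt t x) ^ 2 - (gt s x) ^ 2) = 0
      rw [hgt_mem t x (hsubst hx), hgt_mem s x hx]
      ring
    rw [setIntegral_congr_fun hDs_meas hEq, integral_zero]
  have hband_sub : T.D t \ T.D s ⊆ T.Q s := fun x hx => hx.2
  have hband_eq : ∫ x in T.D t \ T.D s, α x * ((gt t x) ^ 2 - (gt s x) ^ 2) ∂μ
      = c * ∫ x in T.D t \ T.D s, (g x ^ 2 - (T.G g s) ^ 2) ∂μ := by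
    rw [← integral_const_mul]
    apply setIntegral_congr_ae hband_meas
    filter_upwards [hc] with x hcx hx
    rw [hgt_mem t x hx.1, hgt_not s x hx.2, hcx (hband_sub hx)]
  have hQt_eq : ∫ x in (T.D t)ᶜ, α x * ((gt t x) ^ 2 - (gt s x) ^ 2) ∂μ
      = c * (((T.G g t) ^ 2 - (T.G g s) ^ 2) * T.muQ t) := by
    have h1 : ∫ x in (T.D t)ᶜ, α x * ((gt t x) ^ 2 - (gt s x) ^ 2) ∂μ
        = ∫ _x in (T.D t)ᶜ, c * ((T.G g t) ^ 2 - (T.G g s) ^ 2) ∂μ := by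
      apply setIntegral_congr_ae hDt_meas.compl
      filter_upwards [hc] with x hcx hx
      rw [hgt_not t x hx, hgt_not s x (fun h => hx (hsubst h)),
        hcx (fun h => hx (hsubst h))]
    rw [h1, setIntegral_const, smul_eq_mul, measureReal_def]
    have h2 : (μ ((T.D t)ᶜ)).toReal = T.muQ t := rfl
    rw [h2]
    ring
  have hRHS : ∫ x in T.D t \ T.D s, α x * (g x - T.G g (T.tau x)) ^ 2 ∂μ
      = c * ∫ x in T.D t \ T.D s, (g x - T.G g (T.tau x)) ^ 2 ∂μ := by
    rw [← integral_const_mul]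
    apply setIntegral_congr_ae hband_meas
    filter_upwards [hc] with x hcx hx
    rw [hcx (hband_sub hx)]
  have hcore := core T hg_meas hg_nonneg hg_sq hs hst ht
  have hbandmeasure : (μ (T.D t \ T.D s)).toReal = T.muQ s - T.muQ t := by
    rw [diff_toReal T μ hs.le hst' ht.le, muQ_eq T hs.le hs1,
      muQ_eq T ht0 ht.le]
    ring
  have hband_sub_int : ∫ x in T.D t \ T.D s, (g x ^ 2 - (T.G g s) ^ 2) ∂μ
      = (∫ x in T.D t \ T.D s, g x ^ 2 ∂μ) - (T.G g s) ^ 2 * (T.muQ s - T.muQ t) := by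
    rw [integral_sub (hg2_int.restrict) (integrable_const _), integral_const,
      measureReal_restrict_apply_univ, measureReal_def, hbandmeasure, smul_eq_mul]
    ring
  rw [← hsplit1, hDt_split, hDs0, zero_add, hband_eq, hQt_eq, hRHS, hcore, hband_sub_int]
  ring
end
end

section
/- Let μ be a probability measure on ℝ^d and {D_t} a family of trimmed regions for μ, with trimmed σ-algebras F_t. Then: (a) each F_t is a σ-algebra containing all μ-null Borel sets, and F_s ⊆ F_t for s ≤ t; (b) the filtration is right-continuous, i.e. F_t = ⋂_{s>t} F_s for every t ∈ [0,1); and (c) F_0 is μ-degenerate, i.e. every A ∈ F_0 satisfies μ(A) ∈ {0,1}. -/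
open MeasureTheory Set Real Filter

noncomputable section

lemma mem_trimmedMS_iff {d : ℕ} (μ : Measure (Fin d → ℝ)) (Qt A : Set (Fin d → ℝ)) :
    MeasurableSet[trimmedMS μ Qt] A ↔
      MeasurableSet A ∧ (μ (A ∩ Qt) = 0 ∨ μ (Qt \ A) = 0) := Iff.rfl

lemma TrimmedFamily.Q_anti {d : ℕ} {μ : Measure (Fin d → ℝ)} (T : TrimmedFamily d μ)
    {s t : ℝ} (hs : 0 ≤ s) (hst : s ≤ t) (ht : t ≤ 1) : T.Q t ⊆ T.Q s :=
  Set.compl_subset_compl.mpr (T.mono s t hs hst ht)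

lemma TrimmedFamily.Q_eq_iUnion {d : ℕ} {μ : Measure (Fin d → ℝ)} (T : TrimmedFamily d μ)
    {t : ℝ} (ht0 : 0 ≤ t) (ht1 : t < 1) :
    T.Q t = ⋃ n : ℕ, T.Q (t + (1 - t) / (n + 1)) := by
  have h1t : (0:ℝ) < 1 - t := by linarith
  have hlt : ∀ n : ℕ, t < t + (1 - t) / (n + 1) := fun n =>
    lt_add_of_pos_right _ (div_pos h1t (by positivity))
  have hle1 : ∀ n : ℕ, t + (1 - t) / (n + 1) ≤ 1 := by
    intro n
    have : (1 - t) / (n + 1) ≤ 1 - t := div_le_self h1t.le (by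
      have : (0:ℝ) ≤ (n:ℝ) := Nat.cast_nonneg n
      linarith)
    linarith
  have hD : T.D t = ⋂ n : ℕ, T.D (t + (1 - t) / (n + 1)) := by
    apply Set.Subset.antisymm
    · exact Set.subset_iInter fun n => T.mono t _ ht0 (hlt n).le (hle1 n)
    · intro x hx
      rw [T.right_cont t ht0 ht1]
      refine Set.mem_iInter₂.mpr fun u hu => ?_
      obtain ⟨n, hn⟩ := exists_nat_gt ((1 - t) / (u - t))
      have hut : (0:ℝ) < u - t := by linarith [hu.1]
      have hsn : t + (1 - t) / (n + 1) ≤ u := by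
        have h2 : (1 - t) / (u - t) < (n:ℝ) + 1 := by linarith
        have h3 : 1 - t < (u - t) * ((n:ℝ) + 1) := by
          rw [div_lt_iff₀ hut] at h2; linarith [h2]
        have h4 : (1 - t) / ((n:ℝ) + 1) ≤ u - t := by
          rw [div_le_iff₀ (by positivity : (0:ℝ) < (n:ℝ) + 1)]
          nlinarith
        linarith
      exact T.mono _ u (ht0.trans (hlt n).le) hsn hu.2 (Set.mem_iInter.mp hx n)
  show (T.D t)ᶜ = ⋃ n : ℕ, (T.D (t + (1 - t) / (n + 1)))ᶜ
  rw [hD, Set.compl_iInter]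

/-- Properties of the trimmed filtration `{F_t}`:
(a) each `F_t` contains all `μ`-null Borel sets, and `F_s ⊆ F_t` for `s ≤ t`;
(b) right-continuity: for `t < 1`, `A ∈ F_t` iff `A ∈ F_s` for all `s ∈ (t,1]`;
(c) `F_0` is `μ`-degenerate: every `A ∈ F_0` has `μ A ∈ {0,1}`. -/
theorem trimmed_filtration_properties
    {d : ℕ} (μ : Measure (Fin d → ℝ)) [IsProbabilityMeasure μ]
    (T : TrimmedFamily d μ) :
    (∀ t ∈ Icc (0:ℝ) 1, ∀ A : Set (Fin d → ℝ), MeasurableSet A → μ A = 0 →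
        MeasurableSet[trimmedMS μ (T.Q t)] A)
    ∧ (∀ s t : ℝ, 0 ≤ s → s ≤ t → t ≤ 1 →
        trimmedMS μ (T.Q s) ≤ trimmedMS μ (T.Q t))
    ∧ (∀ t : ℝ, 0 ≤ t → t < 1 → ∀ A : Set (Fin d → ℝ),
        (MeasurableSet[trimmedMS μ (T.Q t)] A ↔
          ∀ s ∈ Ioc t (1:ℝ), MeasurableSet[trimmedMS μ (T.Q s)] A))
    ∧ (∀ A : Set (Fin d → ℝ), MeasurableSet[trimmedMS μ (T.Q 0)] A → μ A = 0 ∨ μ A = 1) := by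
  have hmono : ∀ s t : ℝ, 0 ≤ s → s ≤ t → t ≤ 1 →
      trimmedMS μ (T.Q s) ≤ trimmedMS μ (T.Q t) := by
    intro s t hs hst ht A hA
    obtain ⟨hAm, h⟩ := hA
    refine ⟨hAm, ?_⟩
    have hQ : T.Q t ⊆ T.Q s := T.Q_anti hs hst ht
    rcases h with h | h
    · exact Or.inl (measure_mono_null (Set.inter_subset_inter_right _ hQ) h)
    · exact Or.inr (measure_mono_null (Set.diff_subset_diff_left hQ) h)
  refine ⟨?_, hmono, ?_, ?_⟩
  · intro t _ A hA h0
    exact ⟨hA, Or.inl (measure_mono_null Set.inter_subset_left h0)⟩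
  · intro t ht0 ht1 A
    constructor
    · intro hA s hs
      exact hmono t s ht0 hs.1.le hs.2 A hA
    · intro h
      have hmem : ∀ n : ℕ, t + (1 - t) / (n + 1) ∈ Ioc t 1 := by
        intro n
        have h1t : (0:ℝ) < 1 - t := by linarith
        constructor
        · exact lt_add_of_pos_right _ (div_pos h1t (by positivity))
        · have : (1 - t) / (n + 1) ≤ 1 - t := div_le_self h1t.le (by
            have : (0:ℝ) ≤ (n:ℝ) := Nat.cast_nonneg n
            linarith)
          linarith
      have hAm : MeasurableSet A := (h 1 ⟨ht1, le_refl 1⟩).1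
      refine ⟨hAm, ?_⟩
      rw [T.Q_eq_iUnion ht0 ht1]
      by_cases hc : ∀ n : ℕ, μ (A ∩ T.Q (t + (1 - t) / (n + 1))) = 0
      · refine Or.inl ?_
        rw [Set.inter_iUnion]
        exact measure_iUnion_null hc
      · push_neg at hc
        obtain ⟨n0, hn0⟩ := hc
        have hd0 : μ (T.Q (t + (1 - t) / (n0 + 1)) \ A) = 0 :=
          ((h _ (hmem n0)).2).resolve_left hn0
        refine Or.inr ?_
        rw [Set.iUnion_diff]
        refine measure_iUnion_null fun n => ?_
        rcases le_total (t + (1 - t) / (n + 1)) (t + (1 - t) / (n0 + 1)) with hle | hle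
        · -- Q (s n0) ⊆ Q (s n); if A ∩ Q(s n) were null so would A ∩ Q(s n0)
          have hsub : T.Q (t + (1 - t) / (n0 + 1)) ⊆ T.Q (t + (1 - t) / (n + 1)) :=
            T.Q_anti (ht0.trans (hmem n).1.le) hle (hmem n0).2
          have hn : μ (A ∩ T.Q (t + (1 - t) / (n + 1))) ≠ 0 := fun h0 =>
            hn0 (measure_mono_null (Set.inter_subset_inter_right _ hsub) h0)
          exact ((h _ (hmem n)).2).resolve_left hn
        · have hsub : T.Q (t + (1 - t) / (n + 1)) ⊆ T.Q (t + (1 - t) / (n0 + 1)) :=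
            T.Q_anti (ht0.trans (hmem n0).1.le) hle (hmem n).2
          exact measure_mono_null (Set.diff_subset_diff_left hsub) hd0
  · intro A hA
    obtain ⟨hAm, h⟩ := hA
    have hD0 : μ (T.D 0) = 0 := T.null_zero
    rcases h with h | h
    · refine Or.inl ?_
      have : A ⊆ (A ∩ T.Q 0) ∪ T.D 0 := by
        intro x hx
        by_cases hxD : x ∈ T.D 0
        · exact Or.inr hxD
        · exact Or.inl ⟨hx, hxD⟩
      exact measure_mono_null this (measure_union_null h hD0)
    · refine Or.inr ?_
      have hAc : μ Aᶜ = 0 := by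
        have : Aᶜ ⊆ (T.Q 0 \ A) ∪ T.D 0 := by
          intro x hx
          by_cases hxD : x ∈ T.D 0
          · exact Or.inr hxD
          · exact Or.inl ⟨hxD, hx⟩
        exact measure_mono_null this (measure_union_null h hD0)
      have := prob_compl_eq_zero_iff (μ := μ) hAm
      rw [← this]
      exact hAc
end
end

section
/- Let μ be a probability measure on ℝ^d, {D_t} a family of trimmed regions for μ, and g: ℝ^d → [0,∞) Borel and square-integrable w.r.t. μ. For 0 < s < t < 1, the Lebesgue–Stieltjes integral of G_v² with respect to the nonincreasing continuous function v ↦ μ_v = μ(Q_v) over [s,t] satisfies −∫_s^t G_v² dμ_v = ∫_{D_t \ D_s} G_{τ(x)}² μ(dx). -/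
open MeasureTheory Set Real Filter

noncomputable section

namespace TrimmedFamily

variable {d : ℕ} {μ : Measure (Fin d → ℝ)} (T : TrimmedFamily d μ)

-- helper lemmas
lemma tauSet_nonempty (x : Fin d → ℝ) :
    {t | t ∈ Icc (0:ℝ) 1 ∧ x ∈ T.D t}.Nonempty :=
  ⟨1, ⟨zero_le_one, le_refl 1⟩, by simp [T.one_eq_univ]⟩

lemma tauSet_bddBelow (x : Fin d → ℝ) :
    BddBelow {t | t ∈ Icc (0:ℝ) 1 ∧ x ∈ T.D t} :=
  ⟨0, fun y hy => hy.1.1⟩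

lemma mem_D_of_tau_lt {x : Fin d → ℝ} {u : ℝ} (h : T.tau x < u) (hu : u ≤ 1) :
    x ∈ T.D u := by
  obtain ⟨w, hw, hwu⟩ := (csInf_lt_iff (T.tauSet_bddBelow x) (T.tauSet_nonempty x)).mp h
  exact T.mono w u hw.1.1 hwu.le hu hw.2

lemma tau_le_of_mem {x : Fin d → ℝ} {u : ℝ} (hu0 : 0 ≤ u) (hu1 : u ≤ 1)
    (h : x ∈ T.D u) : T.tau x ≤ u :=
  csInf_le (T.tauSet_bddBelow x) ⟨⟨hu0, hu1⟩, h⟩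

lemma mem_D_of_tau_le {x : Fin d → ℝ} {u : ℝ} (hu0 : 0 ≤ u) (hu1 : u < 1)
    (h : T.tau x ≤ u) : x ∈ T.D u := by
  rw [T.right_cont u hu0 hu1]
  refine mem_iInter₂.mpr fun v hv => T.mem_D_of_tau_lt (h.trans_lt hv.1) hv.2

lemma tau_le_iff {x : Fin d → ℝ} {u : ℝ} (hu0 : 0 ≤ u) (hu1 : u < 1) :
    T.tau x ≤ u ↔ x ∈ T.D u :=
  ⟨T.mem_D_of_tau_le hu0 hu1, T.tau_le_of_mem hu0 hu1.le⟩

lemma tau_nonneg (x : Fin d → ℝ) : 0 ≤ T.tau x :=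
  le_csInf (T.tauSet_nonempty x) fun y hy => hy.1.1

lemma tau_le_one (x : Fin d → ℝ) : T.tau x ≤ 1 :=
  T.tau_le_of_mem zero_le_one le_rfl (by simp [T.one_eq_univ])

lemma measurable_tau : Measurable T.tau := by
  refine measurable_of_Iic fun c => ?_
  rcases lt_or_ge c 0 with hc | hc
  · have : T.tau ⁻¹' Iic c = ∅ := by
      ext x; simp only [mem_preimage, mem_Iic, mem_empty_iff_false, iff_false, not_le]
      exact hc.trans_le (T.tau_nonneg x)
    rw [this]; exact MeasurableSet.empty
  rcases lt_or_ge c 1 with hc1 | hc1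
  · have : T.tau ⁻¹' Iic c = T.D c := by
      ext x; simpa using T.tau_le_iff hc hc1
    rw [this]; exact (T.isClosed c ⟨hc, hc1.le⟩).measurableSet
  · have : T.tau ⁻¹' Iic c = univ := by
      ext x; simp only [mem_preimage, mem_Iic, mem_univ, iff_true]
      exact (T.tau_le_one x).trans hc1
    rw [this]; exact MeasurableSet.univ

lemma tau_preimage_Ioc {a b : ℝ} (ha0 : 0 ≤ a) (ha1 : a < 1) (hb0 : 0 ≤ b)
    (hb1 : b < 1) : T.tau ⁻¹' Ioc a b = T.D b \ T.D a := by
  ext x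
  simp only [mem_preimage, mem_Ioc, mem_diff, ← T.tau_le_iff ha0 ha1,
    ← T.tau_le_iff hb0 hb1, not_le]
  exact and_comm

end TrimmedFamily

/-- Identity (10): `−∫_s^t G_v² dμ_v = ∫_{D_t \ D_s} G_{τ(x)}² μ(dx)`, `0 < s < t < 1`.
The Lebesgue–Stieltjes integral w.r.t. the nonincreasing continuous function `v ↦ μ_v`
is encoded via any Stieltjes function `S` agreeing with `−μ_·` on `[s,t]`, so that
`−∫_s^t G_v² dμ_v = ∫_{(s,t]} G_v² dS`. -/
theorem stieltjes_integral_G_sq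
    {d : ℕ} (μ : Measure (Fin d → ℝ)) [IsProbabilityMeasure μ]
    (T : TrimmedFamily d μ) (g : (Fin d → ℝ) → ℝ)
    (hg_meas : Measurable g) (hg_nonneg : ∀ x, 0 ≤ g x) (hg_sq : MemLp g 2 μ)
    (s t : ℝ) (hs : 0 < s) (hst : s < t) (ht : t < 1)
    (S : StieltjesFunction ℝ) (hS : ∀ v ∈ Icc s t, S v = - T.muQ v) :
    ∫ v in Ioc s t, (T.G g v) ^ 2 ∂S.measure
      = ∫ x in T.D t \ T.D s, (T.G g (T.tau x)) ^ 2 ∂μ := by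
    classical
  have hg_int : Integrable g μ := hg_sq.integrable one_le_two
  have hs1 : s < 1 := hst.trans ht
  have hτ : Measurable T.tau := T.measurable_tau
  set E : Set (Fin d → ℝ) := T.D t \ T.D s with hEdef
  have hEpre : T.tau ⁻¹' Ioc s t = E :=
    T.tau_preimage_Ioc hs.le hs1 (hs.le.trans hst.le) ht
  have hEmeas : MeasurableSet E :=
    ((T.isClosed t ⟨(hs.trans hst).le, ht.le⟩).measurableSet).diff
      ((T.isClosed s ⟨hs.le, hs1.le⟩).measurableSet)
  have hDmeas : ∀ v ∈ Icc s t, MeasurableSet (T.D v) := fun v hv =>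
    (T.isClosed v ⟨hs.le.trans hv.1, hv.2.trans ht.le⟩).measurableSet
  have hmuQ : ∀ v ∈ Icc s t, T.muQ v = 1 - (μ (T.D v)).toReal := by
    intro v hv
    rw [TrimmedFamily.muQ, TrimmedFamily.Q,
      measure_compl (hDmeas v hv) (measure_ne_top μ _), measure_univ,
      ENNReal.toReal_sub_of_le prob_le_one ENNReal.one_ne_top, ENNReal.toReal_one]
  have key : ∀ a b, a ∈ Icc s t → b ∈ Icc s t → a ≤ b →
      ENNReal.ofReal (S b - S a) = μ (T.D b \ T.D a) := by
    intro a b haI hbI hab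
    have hsub : T.D a ⊆ T.D b := T.mono a b (hs.le.trans haI.1) hab (hbI.2.trans ht.le)
    rw [measure_diff hsub ((hDmeas a haI).nullMeasurableSet) (measure_ne_top μ _),
      hS a haI, hS b hbI, hmuQ a haI, hmuQ b hbI]
    have h1 : -(1 - (μ (T.D b)).toReal) - -(1 - (μ (T.D a)).toReal)
        = (μ (T.D b)).toReal - (μ (T.D a)).toReal := by ring
    rw [h1, ENNReal.ofReal_sub _ ENNReal.toReal_nonneg,
      ENNReal.ofReal_toReal (measure_ne_top μ _), ENNReal.ofReal_toReal (measure_ne_top μ _)]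
  haveI : IsFiniteMeasure (S.measure.restrict (Ioc s t)) :=
    ⟨by rw [Measure.restrict_apply_univ, S.measure_Ioc]; exact ENNReal.ofReal_lt_top⟩
  have hmeq : S.measure.restrict (Ioc s t) = (μ.restrict E).map T.tau := by
    refine Measure.ext_of_Ioc_finite _ _ ?_ fun a b hab => ?_
    · rw [Measure.restrict_apply_univ, Measure.map_apply hτ MeasurableSet.univ,
        preimage_univ, Measure.restrict_apply_univ, S.measure_Ioc,
        key s t ⟨le_rfl, hst.le⟩ ⟨hst.le, le_rfl⟩ hst.le]
    · rw [Measure.restrict_apply measurableSet_Ioc,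
        Measure.map_apply hτ measurableSet_Ioc,
        Measure.restrict_apply (hτ measurableSet_Ioc)]
      have hinter : Ioc a b ∩ Ioc s t = Ioc (max a s) (min b t) := Ioc_inter_Ioc
      have hpre : T.tau ⁻¹' Ioc a b ∩ E = T.tau ⁻¹' Ioc (max a s) (min b t) := by
        rw [← hEpre, ← preimage_inter, hinter]
      rw [hinter, hpre]
      rcases le_or_gt (max a s) (min b t) with h' | h'
      · have ha'I : (max a s) ∈ Icc s t := ⟨le_max_right _ _, h'.trans (min_le_right _ _)⟩
        have hb'I : (min b t) ∈ Icc s t := ⟨(le_max_right a s).trans h', min_le_right _ _⟩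
        rw [S.measure_Ioc, key _ _ ha'I hb'I h',
          T.tau_preimage_Ioc (hs.le.trans ha'I.1) (lt_of_le_of_lt ha'I.2 ht)
            (hs.le.trans hb'I.1) (lt_of_le_of_lt hb'I.2 ht)]
      · rw [Ioc_eq_empty h'.not_gt, preimage_empty, measure_empty, measure_empty]
  -- globally measurable version of G
  set c : ℝ → ℝ := fun v => max s (min v t) with hcdef
  have hc_mono : Monotone c := fun u v huv =>
    max_le_max le_rfl (min_le_min huv le_rfl)
  have hc_mem : ∀ v, c v ∈ Icc s t := fun v =>
    ⟨le_max_left _ _, max_le hst.le (min_le_right _ _)⟩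
  have hc_id : ∀ v ∈ Icc s t, c v = v := fun v hv => by
    simp only [hcdef]; rw [min_eq_left hv.2, max_eq_right hv.1]
  have hQsub : ∀ u v, u ∈ Icc s t → v ∈ Icc s t → u ≤ v → T.Q v ⊆ T.Q u :=
    fun u v hu hv huv =>
      compl_subset_compl.mpr (T.mono u v (hs.le.trans hu.1) huv (hv.2.trans ht.le))
  have hF_anti : AntitoneOn (fun v => ∫ y in T.Q v, g y ∂μ) (Icc s t) := by
    intro u hu v hv huv
    exact setIntegral_mono_set hg_int.integrableOn
      (Eventually.of_forall hg_nonneg)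
      (HasSubset.Subset.eventuallyLE (hQsub u v hu hv huv))
  have hM_anti : AntitoneOn T.muQ (Icc s t) := fun u hu v hv huv =>
    ENNReal.toReal_mono (measure_ne_top μ _) (measure_mono (hQsub u v hu hv huv))
  have hF'm : Measurable (fun v => ∫ y in T.Q (c v), g y ∂μ) :=
    Antitone.measurable (fun u v huv => hF_anti (hc_mem u) (hc_mem v) (hc_mono huv))
  have hM'm : Measurable (fun v => T.muQ (c v)) :=
    Antitone.measurable (fun u v huv => hM_anti (hc_mem u) (hc_mem v) (hc_mono huv))
  set G' : ℝ → ℝ := fun v => (∫ y in T.Q (c v), g y ∂μ) / T.muQ (c v) with hG'def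
  have hG'm : Measurable G' := hF'm.div hM'm
  have hG'eq : ∀ v ∈ Icc s t, G' v = T.G g v := fun v hv => by
    simp only [hG'def, hc_id v hv]; rfl
  calc ∫ v in Ioc s t, (T.G g v) ^ 2 ∂S.measure
      = ∫ v in Ioc s t, (G' v) ^ 2 ∂S.measure := by
        refine setIntegral_congr_fun measurableSet_Ioc fun v hv => ?_
        rw [hG'eq v (Ioc_subset_Icc_self hv)]
    _ = ∫ v, (G' v) ^ 2 ∂((μ.restrict E).map T.tau) := by rw [← hmeq]
    _ = ∫ x, (G' (T.tau x)) ^ 2 ∂(μ.restrict E) :=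
        integral_map hτ.aemeasurable ((hG'm.pow_const 2).aestronglyMeasurable)
    _ = ∫ x in E, (T.G g (T.tau x)) ^ 2 ∂μ := by
        refine setIntegral_congr_fun hEmeas fun x hx => ?_
        have hτx : T.tau x ∈ Ioc s t := by rw [← hEpre] at hx; exact hx
        rw [hG'eq _ (Ioc_subset_Icc_self hτx)]
end
end

section
/- Let μ be an atomless probability measure on ℝ and {D_t=[a_t,b_t]} an interval family of trimmed regions; for x ≠ a_0 let s(x) denote the endpoint of D_{τ(x)} other than x, and s(a_0)=a_0. Let F̂ be the σ-algebra of Borel sets A with (x ∈ A ⟺ s(x) ∈ A). Then there exists a measurable p: ℝ → [0,1] such that for every f ∈ L₂(ℝ, μ), the L₂-symmetrization f̂ = (E_μ[f² | F̂])^{1/2} satisfies f̂²(x) = p(x) f²(x) + (1−p(x)) f²(s(x)) for μ-a.a. x, and, writing ν_x = p(x) δ_x + (1−p(x)) δ_{s(x)}, one has Ent_μ f² − Ent_μ f̂² = ∫_ℝ Ent_{ν_x}(f²) μ(dx) whenever f² log f² is μ-integrable. -/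
open MeasureTheory Set Real Filter

noncomputable section

/-- The interval trimmed regions: `D_t = [a_t, b_t]` for `t ∈ [0,1)` and `D_1 = ℝ`. -/
def DI (a b : ℝ → ℝ) (t : ℝ) : Set ℝ := if t < 1 then Icc (a t) (b t) else univ

/-- `τ(x) = inf {t ∈ [0,1] : x ∈ D_t}`. -/
def tauI (a b : ℝ → ℝ) (x : ℝ) : ℝ := sInf {t | t ∈ Icc (0:ℝ) 1 ∧ x ∈ DI a b t}

/-- `Q_t = ℝ \ D_t`. -/
def QI (a b : ℝ → ℝ) (t : ℝ) : Set ℝ := (DI a b t)ᶜ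

/-- `μ_t = μ(Q_t)` (as a real number). -/
def muI (μ : Measure ℝ) (a b : ℝ → ℝ) (t : ℝ) : ℝ := (μ (QI a b t)).toReal

/-- `G_t = (1/μ(Q_t)) ∫_{Q_t} g dμ`. -/
def GI (μ : Measure ℝ) (a b : ℝ → ℝ) (g : ℝ → ℝ) (t : ℝ) : ℝ :=
  (∫ y in QI a b t, g y ∂μ) / muI μ a b t

/-- The reflection map: for `x ≠ a_0`, `s(x)` is the endpoint of `D_{τ(x)} = [a_{τ(x)}, b_{τ(x)}]`
other than `x`, and `s(a_0) = a_0`. -/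
def reflI (a b : ℝ → ℝ) (x : ℝ) : ℝ :=
  if x < a 0 then b (tauI a b x) else if a 0 < x then a (tauI a b x) else a 0

/-- The symmetric σ-algebra `F̂`: Borel sets `A` such that `x ∈ A ↔ s(x) ∈ A`. -/
def symmMS (s : ℝ → ℝ) : MeasurableSpace ℝ where
  MeasurableSet' A := MeasurableSet A ∧ ∀ x, x ∈ A ↔ s x ∈ A
  measurableSet_empty := ⟨MeasurableSet.empty, fun _ => Iff.rfl⟩
  measurableSet_compl := by
    rintro A ⟨hA, h⟩
    exact ⟨hA.compl, fun x => by simp only [Set.mem_compl_iff]; exact not_congr (h x)⟩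
  measurableSet_iUnion := by
    intro g hg
    refine ⟨MeasurableSet.iUnion fun i => (hg i).1, fun x => ?_⟩
    simp only [Set.mem_iUnion]
    exact exists_congr fun i => (hg i).2 x
section Geometry

variable {a b : ℝ → ℝ}

def tauSet (a b : ℝ → ℝ) (x : ℝ) : Set ℝ := {t | t ∈ Icc (0:ℝ) 1 ∧ x ∈ DI a b t}

lemma one_mem_tauSet (a b : ℝ → ℝ) (x : ℝ) : (1:ℝ) ∈ tauSet a b x := by
  refine ⟨⟨zero_le_one, le_refl 1⟩, ?_⟩
  simp [DI]

lemma tauSet_bddBelow (a b : ℝ → ℝ) (x : ℝ) : BddBelow (tauSet a b x) :=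
  ⟨0, fun u hu => hu.1.1⟩

lemma tauI_nonneg (a b : ℝ → ℝ) (x : ℝ) : 0 ≤ tauI a b x :=
  le_csInf ⟨1, one_mem_tauSet a b x⟩ (fun u hu => hu.1.1)

lemma tauI_le (a b : ℝ → ℝ) {x t : ℝ} (ht : t ∈ tauSet a b x) : tauI a b x ≤ t :=
  csInf_le (tauSet_bddBelow a b x) ht

lemma tauI_lt_one (ha_lim : Tendsto a (nhdsWithin 1 (Iio 1)) atBot)
    (hb_lim : Tendsto b (nhdsWithin 1 (Iio 1)) atTop) (x : ℝ) :
    tauI a b x < 1 := by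
  have h1 : ∀ᶠ t in nhdsWithin 1 (Iio 1), a t ≤ x := ha_lim.eventually (eventually_le_atBot x)
  have h2 : ∀ᶠ t in nhdsWithin 1 (Iio 1), x ≤ b t := hb_lim.eventually (eventually_ge_atTop x)
  have h3 : ∀ᶠ t in nhdsWithin 1 (Iio 1), (0:ℝ) < t :=
    eventually_nhdsWithin_of_eventually_nhds (eventually_gt_nhds zero_lt_one)
  have h4 : ∀ᶠ t in nhdsWithin (1:ℝ) (Iio 1), t ∈ Iio 1 := eventually_mem_nhdsWithin
  obtain ⟨t, hta, htb, ht0, ht1⟩ := (h1.and (h2.and (h3.and h4))).exists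
  have ht1' : t < 1 := ht1
  have htS : t ∈ tauSet a b x := by
    refine ⟨⟨le_of_lt ht0, le_of_lt ht1'⟩, ?_⟩
    simp only [DI, if_pos ht1', Set.mem_Icc]
    exact ⟨hta, htb⟩
  exact lt_of_le_of_lt (tauI_le a b htS) ht1'

end Geometry
section Geometry2

variable {a b : ℝ → ℝ}

lemma a_le_a0 (ha_anti : StrictAntiOn a (Ico (0:ℝ) 1)) {t : ℝ} (ht : t ∈ Ico (0:ℝ) 1) :
    a t ≤ a 0 := by
  rcases eq_or_lt_of_le ht.1 with h | h
  · rw [← h]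
  · exact le_of_lt (ha_anti ⟨le_refl 0, zero_lt_one⟩ ht h)

lemma b0_le_b (hb_mono : StrictMonoOn b (Ico (0:ℝ) 1)) {t : ℝ} (ht : t ∈ Ico (0:ℝ) 1) :
    b 0 ≤ b t := by
  rcases eq_or_lt_of_le ht.1 with h | h
  · rw [← h]
  · exact le_of_lt (hb_mono ⟨le_refl 0, zero_lt_one⟩ ht h)

lemma a_lt_a0 (ha_anti : StrictAntiOn a (Ico (0:ℝ) 1)) {t : ℝ} (ht : t ∈ Ioo (0:ℝ) 1) :
    a t < a 0 := ha_anti ⟨le_refl 0, zero_lt_one⟩ ⟨ht.1.le, ht.2⟩ ht.1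

lemma b0_lt_b (hb_mono : StrictMonoOn b (Ico (0:ℝ) 1)) {t : ℝ} (ht : t ∈ Ioo (0:ℝ) 1) :
    b 0 < b t := hb_mono ⟨le_refl 0, zero_lt_one⟩ ⟨ht.1.le, ht.2⟩ ht.1

lemma tauI_a0 (hab0 : a 0 = b 0) : tauI a b (a 0) = 0 := by
  refine le_antisymm (tauI_le a b ?_) (tauI_nonneg a b _)
  refine ⟨⟨le_refl 0, zero_le_one⟩, ?_⟩
  simp only [DI, if_pos zero_lt_one, Set.mem_Icc]
  exact ⟨le_refl _, hab0.le⟩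

lemma tau_right (hab0 : a 0 = b 0)
    (ha_anti : StrictAntiOn a (Ico (0:ℝ) 1)) (hb_cont : ContinuousOn b (Ico (0:ℝ) 1))
    (ha_lim : Tendsto a (nhdsWithin 1 (Iio 1)) atBot)
    (hb_lim : Tendsto b (nhdsWithin 1 (Iio 1)) atTop)
    {x : ℝ} (hx : a 0 < x) :
    0 < tauI a b x ∧ tauI a b x < 1 ∧ b (tauI a b x) = x := by
  have hτ1 : tauI a b x < 1 := tauI_lt_one ha_lim hb_lim x
  have hτ0 : 0 ≤ tauI a b x := tauI_nonneg a b x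
  -- positivity
  have hpos : 0 < tauI a b x := by
    have hc0 : ContinuousWithinAt b (Ico (0:ℝ) 1) 0 := hb_cont 0 ⟨le_refl 0, zero_lt_one⟩
    have hb0x : b 0 < x := hab0 ▸ hx
    have hev : {t | b t < x} ∈ nhdsWithin (0:ℝ) (Ico (0:ℝ) 1) :=
      hc0 (isOpen_Iio.mem_nhds hb0x)
    rw [Metric.mem_nhdsWithin_iff] at hev
    obtain ⟨δ, hδ, hsub⟩ := hev
    have hle : min δ 1 ≤ tauI a b x := by
      refine le_csInf ⟨1, one_mem_tauSet a b x⟩ (fun u hu => ?_)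
      by_contra hlt
      push_neg at hlt
      have hu1 : u < 1 := lt_of_lt_of_le hlt (min_le_right _ _)
      have huδ : u < δ := lt_of_lt_of_le hlt (min_le_left _ _)
      have hbu : b u < x := by
        refine hsub ⟨?_, hu.1.1, hu1⟩
        rw [Metric.mem_ball, Real.dist_eq, sub_zero, abs_of_nonneg hu.1.1]
        exact huδ
      have := hu.2
      simp only [DI, if_pos hu1, Set.mem_Icc] at this
      exact absurd this.2 (not_le.mpr hbu)
    exact lt_of_lt_of_le (lt_min hδ zero_lt_one) hle
  have hτmem : tauI a b x ∈ Ico (0:ℝ) 1 := ⟨hτ0, hτ1⟩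
  have hcτ : ContinuousWithinAt b (Ico (0:ℝ) 1) (tauI a b x) := hb_cont _ hτmem
  -- x ≤ b τ
  have hxle : x ≤ b (tauI a b x) := by
    by_contra h
    push_neg at h
    have hev : {t | b t < x} ∈ nhdsWithin (tauI a b x) (Ico (0:ℝ) 1) :=
      hcτ (isOpen_Iio.mem_nhds h)
    rw [Metric.mem_nhdsWithin_iff] at hev
    obtain ⟨δ, hδ, hsub⟩ := hev
    have hle : min (tauI a b x + δ) 1 ≤ tauI a b x := by
      refine le_csInf ⟨1, one_mem_tauSet a b x⟩ (fun u hu => ?_)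
      by_contra hlt
      push_neg at hlt
      have hu1 : u < 1 := lt_of_lt_of_le hlt (min_le_right _ _)
      have huδ : u < tauI a b x + δ := lt_of_lt_of_le hlt (min_le_left _ _)
      have huτ : tauI a b x ≤ u := tauI_le a b hu
      have hbu : b u < x := by
        refine hsub ⟨?_, hu.1.1, hu1⟩
        rw [Metric.mem_ball, Real.dist_eq, abs_of_nonneg (sub_nonneg.mpr huτ)]
        linarith
      have := hu.2
      simp only [DI, if_pos hu1, Set.mem_Icc] at this
      exact absurd this.2 (not_le.mpr hbu)
    have : tauI a b x < min (tauI a b x + δ) 1 := lt_min (by linarith) hτ1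
    linarith [le_trans this.le hle]
  -- b τ ≤ x
  have hlex : b (tauI a b x) ≤ x := by
    by_contra h
    push_neg at h
    have hev : {t | x < b t} ∈ nhdsWithin (tauI a b x) (Ico (0:ℝ) 1) :=
      hcτ (isOpen_Ioi.mem_nhds h)
    rw [Metric.mem_nhdsWithin_iff] at hev
    obtain ⟨δ, hδ, hsub⟩ := hev
    set t := max (tauI a b x - δ/2) (tauI a b x / 2) with ht_def
    have htlt : t < tauI a b x := by
      apply max_lt
      · linarith
      · linarith
    have ht0 : 0 ≤ t := le_trans (by linarith) (le_max_right _ _)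
    have ht1 : t < 1 := lt_trans htlt hτ1
    have hdist : dist t (tauI a b x) < δ := by
      rw [Real.dist_eq, abs_of_nonpos (by linarith)]
      have : tauI a b x - δ/2 ≤ t := le_max_left _ _
      linarith
    have hbt : x < b t := hsub ⟨hdist, ht0, ht1⟩
    have hat : a t ≤ x := le_trans (a_le_a0 ha_anti ⟨ht0, ht1⟩) hx.le
    have htS : t ∈ tauSet a b x := by
      refine ⟨⟨ht0, ht1.le⟩, ?_⟩
      simp only [DI, if_pos ht1, Set.mem_Icc]
      exact ⟨hat, hbt.le⟩
    exact absurd (tauI_le a b htS) (not_le.mpr htlt)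
  exact ⟨hpos, hτ1, le_antisymm hlex hxle⟩

lemma tau_left (hab0 : a 0 = b 0)
    (ha_cont : ContinuousOn a (Ico (0:ℝ) 1)) (hb_mono : StrictMonoOn b (Ico (0:ℝ) 1))
    (ha_lim : Tendsto a (nhdsWithin 1 (Iio 1)) atBot)
    (hb_lim : Tendsto b (nhdsWithin 1 (Iio 1)) atTop)
    {x : ℝ} (hx : x < a 0) :
    0 < tauI a b x ∧ tauI a b x < 1 ∧ a (tauI a b x) = x := by
  have hτ1 : tauI a b x < 1 := tauI_lt_one ha_lim hb_lim x
  have hτ0 : 0 ≤ tauI a b x := tauI_nonneg a b x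
  have hpos : 0 < tauI a b x := by
    have hc0 : ContinuousWithinAt a (Ico (0:ℝ) 1) 0 := ha_cont 0 ⟨le_refl 0, zero_lt_one⟩
    have hev : {t | x < a t} ∈ nhdsWithin (0:ℝ) (Ico (0:ℝ) 1) :=
      hc0 (isOpen_Ioi.mem_nhds hx)
    rw [Metric.mem_nhdsWithin_iff] at hev
    obtain ⟨δ, hδ, hsub⟩ := hev
    have hle : min δ 1 ≤ tauI a b x := by
      refine le_csInf ⟨1, one_mem_tauSet a b x⟩ (fun u hu => ?_)
      by_contra hlt
      push_neg at hlt
      have hu1 : u < 1 := lt_of_lt_of_le hlt (min_le_right _ _)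
      have huδ : u < δ := lt_of_lt_of_le hlt (min_le_left _ _)
      have hau : x < a u := by
        refine hsub ⟨?_, hu.1.1, hu1⟩
        rw [Metric.mem_ball, Real.dist_eq, sub_zero, abs_of_nonneg hu.1.1]
        exact huδ
      have := hu.2
      simp only [DI, if_pos hu1, Set.mem_Icc] at this
      exact absurd this.1 (not_le.mpr hau)
    exact lt_of_lt_of_le (lt_min hδ zero_lt_one) hle
  have hτmem : tauI a b x ∈ Ico (0:ℝ) 1 := ⟨hτ0, hτ1⟩
  have hcτ : ContinuousWithinAt a (Ico (0:ℝ) 1) (tauI a b x) := ha_cont _ hτmem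
  have hxge : a (tauI a b x) ≤ x := by
    by_contra h
    push_neg at h
    have hev : {t | x < a t} ∈ nhdsWithin (tauI a b x) (Ico (0:ℝ) 1) :=
      hcτ (isOpen_Ioi.mem_nhds h)
    rw [Metric.mem_nhdsWithin_iff] at hev
    obtain ⟨δ, hδ, hsub⟩ := hev
    have hle : min (tauI a b x + δ) 1 ≤ tauI a b x := by
      refine le_csInf ⟨1, one_mem_tauSet a b x⟩ (fun u hu => ?_)
      by_contra hlt
      push_neg at hlt
      have hu1 : u < 1 := lt_of_lt_of_le hlt (min_le_right _ _)
      have huδ : u < tauI a b x + δ := lt_of_lt_of_le hlt (min_le_left _ _)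
      have huτ : tauI a b x ≤ u := tauI_le a b hu
      have hau : x < a u := by
        refine hsub ⟨?_, hu.1.1, hu1⟩
        rw [Metric.mem_ball, Real.dist_eq, abs_of_nonneg (sub_nonneg.mpr huτ)]
        linarith
      have := hu.2
      simp only [DI, if_pos hu1, Set.mem_Icc] at this
      exact absurd this.1 (not_le.mpr hau)
    have : tauI a b x < min (tauI a b x + δ) 1 := lt_min (by linarith) hτ1
    linarith [le_trans this.le hle]
  have hxle : x ≤ a (tauI a b x) := by
    by_contra h
    push_neg at h
    have hev : {t | a t < x} ∈ nhdsWithin (tauI a b x) (Ico (0:ℝ) 1) :=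
      hcτ (isOpen_Iio.mem_nhds h)
    rw [Metric.mem_nhdsWithin_iff] at hev
    obtain ⟨δ, hδ, hsub⟩ := hev
    set t := max (tauI a b x - δ/2) (tauI a b x / 2) with ht_def
    have htlt : t < tauI a b x := by
      apply max_lt
      · linarith
      · linarith
    have ht0 : 0 ≤ t := le_trans (by linarith) (le_max_right _ _)
    have ht1 : t < 1 := lt_trans htlt hτ1
    have hdist : dist t (tauI a b x) < δ := by
      rw [Real.dist_eq, abs_of_nonpos (by linarith)]
      have : tauI a b x - δ/2 ≤ t := le_max_left _ _
      linarith
    have hat : a t < x := hsub ⟨hdist, ht0, ht1⟩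
    have hbt : x ≤ b t := by
      have : b 0 ≤ b t := b0_le_b hb_mono ⟨ht0, ht1⟩
      calc x ≤ a 0 := hx.le
        _ = b 0 := hab0
        _ ≤ b t := this
    have htS : t ∈ tauSet a b x := by
      refine ⟨⟨ht0, ht1.le⟩, ?_⟩
      simp only [DI, if_pos ht1, Set.mem_Icc]
      exact ⟨hat.le, hbt⟩
    exact absurd (tauI_le a b htS) (not_le.mpr htlt)
  exact ⟨hpos, hτ1, le_antisymm hxge hxle⟩

end Geometry2
section Geometry3

variable {a b : ℝ → ℝ}

lemma tauI_left_endpoint (hab0 : a 0 = b 0)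
    (ha_cont : ContinuousOn a (Ico (0:ℝ) 1))
    (ha_anti : StrictAntiOn a (Ico (0:ℝ) 1)) (hb_mono : StrictMonoOn b (Ico (0:ℝ) 1))
    (ha_lim : Tendsto a (nhdsWithin 1 (Iio 1)) atBot)
    (hb_lim : Tendsto b (nhdsWithin 1 (Iio 1)) atTop)
    {t : ℝ} (ht : t ∈ Ioo (0:ℝ) 1) : tauI a b (a t) = t := by
  have hx : a t < a 0 := a_lt_a0 ha_anti ht
  obtain ⟨h0, h1, heq⟩ := tau_left hab0 ha_cont hb_mono ha_lim hb_lim hx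
  exact ha_anti.injOn ⟨(tauI_nonneg a b (a t)), h1⟩ ⟨ht.1.le, ht.2⟩ heq

lemma tauI_right_endpoint (hab0 : a 0 = b 0)
    (ha_anti : StrictAntiOn a (Ico (0:ℝ) 1)) (hb_cont : ContinuousOn b (Ico (0:ℝ) 1))
    (hb_mono : StrictMonoOn b (Ico (0:ℝ) 1))
    (ha_lim : Tendsto a (nhdsWithin 1 (Iio 1)) atBot)
    (hb_lim : Tendsto b (nhdsWithin 1 (Iio 1)) atTop)
    {t : ℝ} (ht : t ∈ Ioo (0:ℝ) 1) : tauI a b (b t) = t := by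
  have hx : a 0 < b t := hab0 ▸ b0_lt_b hb_mono ht
  obtain ⟨h0, h1, heq⟩ := tau_right hab0 ha_anti hb_cont ha_lim hb_lim hx
  exact hb_mono.injOn ⟨(tauI_nonneg a b (b t)), h1⟩ ⟨ht.1.le, ht.2⟩ heq

lemma tauI_monoOn (hab0 : a 0 = b 0) (ha_anti : StrictAntiOn a (Ico (0:ℝ) 1)) :
    MonotoneOn (tauI a b) (Ici (a 0)) := by
  intro x hx y hy hxy
  refine csInf_le_csInf (tauSet_bddBelow a b x) ⟨1, one_mem_tauSet a b y⟩ (fun u hu => ?_)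
  obtain ⟨huI, huD⟩ := hu
  refine ⟨huI, ?_⟩
  by_cases hu1 : u < 1
  · rw [DI, if_pos hu1, Set.mem_Icc] at huD ⊢
    exact ⟨le_trans (a_le_a0 ha_anti ⟨huI.1, hu1⟩) hx, le_trans hxy huD.2⟩
  · simp [DI, if_neg hu1]

lemma tauI_antiOn (hab0 : a 0 = b 0) (hb_mono : StrictMonoOn b (Ico (0:ℝ) 1)) :
    AntitoneOn (tauI a b) (Iic (a 0)) := by
  intro x hx y hy hxy
  refine csInf_le_csInf (tauSet_bddBelow a b y) ⟨1, one_mem_tauSet a b x⟩ (fun u hu => ?_)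
  obtain ⟨huI, huD⟩ := hu
  refine ⟨huI, ?_⟩
  by_cases hu1 : u < 1
  · rw [DI, if_pos hu1, Set.mem_Icc] at huD ⊢
    refine ⟨le_trans huD.1 hxy, le_trans hy ?_⟩
    calc a 0 = b 0 := hab0
      _ ≤ b u := b0_le_b hb_mono ⟨huI.1, hu1⟩
  · simp [DI, if_neg hu1]

lemma reflI_a0 (a b : ℝ → ℝ) : reflI a b (a 0) = a 0 := by
  simp [reflI]

lemma reflI_of_lt {x : ℝ} (hx : x < a 0) : reflI a b x = b (tauI a b x) := by
  simp [reflI, if_pos hx]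

lemma reflI_of_gt {x : ℝ} (hx : a 0 < x) : reflI a b x = a (tauI a b x) := by
  simp [reflI, if_neg (not_lt.mpr hx.le), if_pos hx]

end Geometry3
section Geometry4

variable {a b : ℝ → ℝ}
variable (hab0 : a 0 = b 0)
  (ha_cont : ContinuousOn a (Ico (0:ℝ) 1)) (hb_cont : ContinuousOn b (Ico (0:ℝ) 1))
  (ha_anti : StrictAntiOn a (Ico (0:ℝ) 1)) (hb_mono : StrictMonoOn b (Ico (0:ℝ) 1))
  (ha_lim : Tendsto a (nhdsWithin 1 (Iio 1)) atBot)
  (hb_lim : Tendsto b (nhdsWithin 1 (Iio 1)) atTop)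

include hab0 ha_cont hb_cont ha_anti hb_mono ha_lim hb_lim

lemma reflI_invol : ∀ x, reflI a b (reflI a b x) = x := by
  intro x
  rcases lt_trichotomy x (a 0) with hx | hx | hx
  · -- x < a 0 : reflI x = b τx > a 0
    obtain ⟨h0, h1, heq⟩ := tau_left hab0 ha_cont hb_mono ha_lim hb_lim hx
    rw [reflI_of_lt hx]
    have hgt : a 0 < b (tauI a b x) := hab0 ▸ b0_lt_b hb_mono ⟨h0, h1⟩
    rw [reflI_of_gt hgt,
      tauI_right_endpoint hab0 ha_anti hb_cont hb_mono ha_lim hb_lim ⟨h0, h1⟩, heq]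
  · rw [hx, reflI_a0, reflI_a0]
  · obtain ⟨h0, h1, heq⟩ := tau_right hab0 ha_anti hb_cont ha_lim hb_lim hx
    rw [reflI_of_gt hx]
    have hlt : a (tauI a b x) < a 0 := a_lt_a0 ha_anti ⟨h0, h1⟩
    rw [reflI_of_lt hlt,
      tauI_left_endpoint hab0 ha_cont ha_anti hb_mono ha_lim hb_lim ⟨h0, h1⟩, heq]

lemma reflI_antitone : Antitone (reflI a b) := by
  intro x y hxy
  rcases lt_trichotomy x (a 0) with hx | hx | hx
  · rcases lt_trichotomy y (a 0) with hy | hy | hy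
    · -- both < a 0
      rw [reflI_of_lt hx, reflI_of_lt hy]
      have hτx := tau_left hab0 ha_cont hb_mono ha_lim hb_lim hx
      have hτy := tau_left hab0 ha_cont hb_mono ha_lim hb_lim hy
      have hτ : tauI a b y ≤ tauI a b x := tauI_antiOn hab0 hb_mono hx.le hy.le hxy
      exact hb_mono.monotoneOn ⟨hτy.1.le, hτy.2.1⟩ ⟨hτx.1.le, hτx.2.1⟩ hτ
    · rw [hy, reflI_a0, reflI_of_lt hx]
      have hτx := tau_left hab0 ha_cont hb_mono ha_lim hb_lim hx
      exact hab0.le.trans (b0_le_b hb_mono ⟨hτx.1.le, hτx.2.1⟩)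
    · rw [reflI_of_lt hx, reflI_of_gt hy]
      have hτx := tau_left hab0 ha_cont hb_mono ha_lim hb_lim hx
      have hτy := tau_right hab0 ha_anti hb_cont ha_lim hb_lim hy
      calc a (tauI a b y) ≤ a 0 := a_le_a0 ha_anti ⟨hτy.1.le, hτy.2.1⟩
        _ = b 0 := hab0
        _ ≤ b (tauI a b x) := b0_le_b hb_mono ⟨hτx.1.le, hτx.2.1⟩
  · rcases lt_or_eq_of_le (hx ▸ hxy) with hy | hy
    · rw [hx, reflI_a0, reflI_of_gt hy]
      exact a_le_a0 ha_anti ⟨tauI_nonneg a b y,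
        tauI_lt_one ha_lim hb_lim y⟩
    · rw [hx, ← hy, reflI_a0]
  · have hy : a 0 < y := lt_of_lt_of_le hx hxy
    rw [reflI_of_gt hx, reflI_of_gt hy]
    have hτ : tauI a b x ≤ tauI a b y := tauI_monoOn hab0 ha_anti hx.le hy.le hxy
    exact (ha_anti.antitoneOn) ⟨tauI_nonneg a b x, tauI_lt_one ha_lim hb_lim x⟩
      ⟨tauI_nonneg a b y, tauI_lt_one ha_lim hb_lim y⟩ hτ

lemma reflI_measurable : Measurable (reflI a b) :=
  (reflI_antitone hab0 ha_cont hb_cont ha_anti hb_mono ha_lim hb_lim).measurable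

end Geometry4
section Abstract

open scoped ENNReal NNReal

lemma mul_log_ge_neg_one {z : ℝ} (hz : 0 ≤ z) : -1 ≤ z * Real.log z := by
  rcases eq_or_lt_of_le hz with h | h
  · simp [← h]
  · have h1 : Real.log z⁻¹ ≤ z⁻¹ - 1 := Real.log_le_sub_one_of_pos (by positivity)
    have h2 : z * Real.log z = -(z * Real.log z⁻¹) := by
      rw [Real.log_inv]; ring
    have h3 : z * Real.log z⁻¹ ≤ z * (z⁻¹ - 1) := by
      exact mul_le_mul_of_nonneg_left h1 hz
    have h4 : z * (z⁻¹ - 1) = 1 - z := by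
      field_simp
    nlinarith

lemma integral_two_point {c d : ℝ} (hc : 0 ≤ c) (hd : 0 ≤ d) (x y : ℝ) (h : ℝ → ℝ) :
    ∫ z, h z ∂(ENNReal.ofReal c • Measure.dirac x + ENNReal.ofReal d • Measure.dirac y)
      = c * h x + d * h y := by
  have hix : Integrable h (ENNReal.ofReal c • Measure.dirac x) := by
    refine Integrable.smul_measure ?_ ENNReal.ofReal_ne_top
    exact (integrable_const (h x)).congr (ae_eq_dirac h).symm
  have hiy : Integrable h (ENNReal.ofReal d • Measure.dirac y) := by
    refine Integrable.smul_measure ?_ ENNReal.ofReal_ne_top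
    exact (integrable_const (h y)).congr (ae_eq_dirac h).symm
  rw [integral_add_measure hix hiy, integral_smul_measure, integral_smul_measure,
    integral_dirac, integral_dirac, ENNReal.toReal_ofReal hc, ENNReal.toReal_ofReal hd,
    smul_eq_mul, smul_eq_mul]

lemma entropy_two_point {c d : ℝ} (hc : 0 ≤ c) (hd : 0 ≤ d) (x y : ℝ) (h : ℝ → ℝ) :
    entropy (ENNReal.ofReal c • Measure.dirac x + ENNReal.ofReal d • Measure.dirac y) h
      = (c * (h x * Real.log (h x)) + d * (h y * Real.log (h y)))
        - (c * h x + d * h y) * Real.log (c * h x + d * h y) := by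
  rw [entropy, integral_two_point hc hd x y h,
    integral_two_point hc hd x y (fun z => h z * Real.log (h z))]

theorem symm_condexp_entropy (μ : Measure ℝ) [IsProbabilityMeasure μ]
    (s : ℝ → ℝ) (hs : Measurable s) (hss : ∀ x, s (s x) = x) :
    ∃ p : ℝ → ℝ, Measurable p ∧ (∀ x, p x ∈ Icc (0:ℝ) 1) ∧
      ∀ f : ℝ → ℝ, MemLp f 2 μ →
        ((μ[(fun y => f y ^ 2)|symmMS s])
            =ᵐ[μ] fun x => p x * f x ^ 2 + (1 - p x) * f (s x) ^ 2)
        ∧ (Integrable (fun x => f x ^ 2 * Real.log (f x ^ 2)) μ →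
            entropy μ (fun x => f x ^ 2) - entropy μ (μ[(fun y => f y ^ 2)|symmMS s])
              = ∫ x, entropy
                  (ENNReal.ofReal (p x) • Measure.dirac x
                    + ENNReal.ofReal (1 - p x) • Measure.dirac (s x))
                  (fun y => f y ^ 2) ∂μ) := by
  -- the symmetrized measure
  set ν : Measure ℝ := μ + Measure.map s μ with hν_def
  haveI : IsProbabilityMeasure (Measure.map s μ) := Measure.isProbabilityMeasure_map hs.aemeasurable
  haveI : IsFiniteMeasure ν := by rw [hν_def]; infer_instance
  have hmapmap : Measure.map s (Measure.map s μ) = μ := by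
    rw [Measure.map_map hs hs]
    have : s ∘ s = id := funext hss
    rw [this, Measure.map_id]
  have hνs : Measure.map s ν = ν := by
    rw [hν_def, Measure.map_add _ _ hs, hmapmap, add_comm]
  have hmp : MeasurePreserving s ν ν := ⟨hs, hνs⟩
  have hμν : μ ≪ ν := Measure.absolutelyContinuous_of_le (Measure.le_add_right le_rfl)
  set ρ : ℝ → ℝ≥0∞ := μ.rnDeriv ν with hρ_def
  have hρm : Measurable ρ := Measure.measurable_rnDeriv μ ν
  have hρ1 : ρ ≤ᵐ[ν] 1 := Measure.rnDeriv_le_one_of_le (Measure.le_add_right le_rfl)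
  have hwd : ν.withDensity ρ = μ := Measure.withDensity_rnDeriv_eq μ ν hμν
  have hswap : ∀ g : ℝ → ℝ≥0∞, Measurable g → ∫⁻ x, g (s x) ∂ν = ∫⁻ x, g x ∂ν := by
    intro g hg
    conv_rhs => rw [← hνs]
    rw [lintegral_map hg hs]
  -- density of map s μ
  have hρs : ν.withDensity (fun x => ρ (s x)) = Measure.map s μ := by
    refine Measure.ext (fun A hA => ?_)
    rw [withDensity_apply _ hA, Measure.map_apply hs hA, ← hwd,
      withDensity_apply _ (hs hA)]
    rw [← lintegral_indicator hA (fun a => ρ (s a)), ← lintegral_indicator (hs hA) ρ]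
    have := hswap (fun x => Set.indicator (s ⁻¹' A) ρ x) (hρm.indicator (hs hA))
    rw [← this]
    congr 1
    funext x
    by_cases hx : x ∈ A
    · have hsx : s x ∈ s ⁻¹' A := by simp [Set.mem_preimage, hss x, hx]
      simp only [Set.indicator_of_mem hx, Set.indicator_of_mem hsx]
    · have hsx : s x ∉ s ⁻¹' A := by simp [Set.mem_preimage, hss x, hx]
      simp only [Set.indicator_of_notMem hx, Set.indicator_of_notMem hsx]
  have hsum : (fun x => ρ x + ρ (s x)) =ᵐ[ν] (fun _ => 1) := by
    have h1 : (fun x => ρ x + ρ (s x)) =ᵐ[ν] ν.rnDeriv ν := by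
      refine Measure.eq_rnDeriv (hρm.add (hρm.comp hs)) Measure.MutuallySingular.zero_left ?_
      rw [zero_add]
      have : (fun x => ρ x + ρ (s x)) = ρ + (fun x => ρ (s x)) := rfl
      rw [this, withDensity_add_left hρm, hwd, hρs, hν_def]
    exact h1.trans (Measure.rnDeriv_self ν)
  -- the weight function
  refine ⟨fun x => min (ρ x).toReal 1, (hρm.ennreal_toReal).min measurable_const,
    fun x => ⟨le_min ENNReal.toReal_nonneg zero_le_one, min_le_right _ _⟩, ?_⟩
  set p : ℝ → ℝ := fun x => min (ρ x).toReal 1 with hp_def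
  -- transfer of a.e. statements along s
  have hcomp_ae : ∀ {P : ℝ → Prop}, (∀ᵐ y ∂ν, P y) → (∀ᵐ x ∂ν, P (s x)) := by
    intro P hP
    have h0 : ν (s ⁻¹' {y | ¬ P y}) = 0 :=
      hmp.quasiMeasurePreserving.preimage_null (ae_iff.mp hP)
    rw [ae_iff]
    exact h0
  -- a.e. identities for p under ν
  have hae_ν : ∀ᵐ x ∂ν, ρ x ≤ 1 ∧ ρ (s x) ≤ 1 ∧ ρ x + ρ (s x) = 1 := by
    filter_upwards [hρ1, hcomp_ae hρ1, hsum] with x h1 h2 h3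
    exact ⟨h1, h2, h3⟩
  have hae_ν' : ∀ᵐ x ∂ν, ENNReal.ofReal (p x) = ρ x ∧ ENNReal.ofReal (1 - p x) = ρ (s x)
      ∧ p (s x) = 1 - p x := by
    filter_upwards [hae_ν] with x hx
    obtain ⟨h1, h2, h3⟩ := hx
    have hfin : ρ x ≠ ⊤ := ne_top_of_le_ne_top ENNReal.one_ne_top h1
    have hfin' : ρ (s x) ≠ ⊤ := ne_top_of_le_ne_top ENNReal.one_ne_top h2
    have htR : (ρ x).toReal + (ρ (s x)).toReal = 1 := by
      rw [← ENNReal.toReal_add hfin hfin', h3, ENNReal.toReal_one]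
    have hpt : p x = (ρ x).toReal := min_eq_left (by
      simpa using ENNReal.toReal_mono ENNReal.one_ne_top h1)
    have hpt' : p (s x) = (ρ (s x)).toReal := min_eq_left (by
      simpa using ENNReal.toReal_mono ENNReal.one_ne_top h2)
    refine ⟨?_, ?_, ?_⟩
    · rw [hpt, ENNReal.ofReal_toReal hfin]
    · rw [hpt, show (1 : ℝ) - (ρ x).toReal = (ρ (s x)).toReal by linarith,
        ENNReal.ofReal_toReal hfin']
    · rw [hpt', hpt]; linarith
  have hae_μ : ∀ᵐ x ∂μ, ENNReal.ofReal (p x) = ρ x ∧ ENNReal.ofReal (1 - p x) = ρ (s x)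
      ∧ p (s x) = 1 - p x := hμν.ae_le hae_ν'
  have hp01 : ∀ x, 0 ≤ p x ∧ p x ≤ 1 :=
    fun x => ⟨le_min ENNReal.toReal_nonneg zero_le_one, min_le_right _ _⟩
  have hρs_le : ∀ᵐ x ∂μ, ρ (s x) ≤ 1 := by
    filter_upwards [hae_μ] with x hx
    rw [← hx.2.1]
    calc ENNReal.ofReal (1 - p x) ≤ ENNReal.ofReal 1 :=
          ENNReal.ofReal_le_ofReal (by linarith [(hp01 x).1])
      _ = 1 := ENNReal.ofReal_one
  have hμ_lint : ∀ h : ℝ → ℝ≥0∞, Measurable h → ∫⁻ x, h x ∂μ = ∫⁻ x, ρ x * h x ∂ν := by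
    intro h hh
    rw [← hwd, lintegral_withDensity_eq_lintegral_mul _ hρm hh]
    rfl
  have hT : ∀ g : ℝ → ℝ≥0∞, Measurable g →
      ∫⁻ x, ρ (s x) * g (s x) ∂μ = ∫⁻ x, ρ (s x) * g x ∂μ := by
    intro g hg
    rw [hμ_lint (fun x => ρ (s x) * g (s x))
        (((hρm.comp hs).mul (hg.comp hs)) : Measurable fun x => ρ (s x) * g (s x)),
      hμ_lint (fun x => ρ (s x) * g x)
        (((hρm.comp hs).mul hg) : Measurable fun x => ρ (s x) * g x)]
    have h1 := hswap (fun x => ρ (s x) * (ρ x * g x)) ((hρm.comp hs).mul (hρm.mul hg))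
    calc ∫⁻ x, ρ x * (ρ (s x) * g (s x)) ∂ν
        = ∫⁻ x, (fun y => ρ (s y) * (ρ y * g y)) (s x) ∂ν := by
          congr 1; funext x; simp only [hss x]
      _ = ∫⁻ x, ρ (s x) * (ρ x * g x) ∂ν := h1
      _ = ∫⁻ x, ρ x * (ρ (s x) * g x) ∂ν := by congr 1; funext x; ring
  have hnull : ∀ {N : Set ℝ}, μ N = 0 → ∀ᵐ x ∂μ, ρ (s x) = 0 ∨ s x ∉ N := by
    intro N hN
    obtain ⟨M, hNM, hMmeas, hM0⟩ := exists_measurable_superset_of_null hN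
    set I : ℝ → ℝ≥0∞ := M.indicator 1 with hI_def
    have hIm : Measurable I := measurable_one.indicator hMmeas
    have h2 : ∫⁻ x, ρ (s x) * I x ∂μ = 0 := by
      have hle : ∫⁻ x, ρ (s x) * I x ∂μ ≤ ∫⁻ x, I x ∂μ := by
        refine lintegral_mono_ae ?_
        filter_upwards [hρs_le] with x hx
        calc ρ (s x) * I x ≤ 1 * I x := mul_le_mul_left hx _
          _ = I x := one_mul _
      have : ∫⁻ x, I x ∂μ = 0 := by
        rw [hI_def, lintegral_indicator hMmeas]
        simp [hM0]
      exact le_antisymm (this ▸ hle) (by positivity)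
    have h1 : ∫⁻ x, ρ (s x) * I (s x) ∂μ = 0 := by rw [hT I hIm, h2]
    have h3 : (fun x => ρ (s x) * I (s x)) =ᵐ[μ] 0 :=
      (lintegral_eq_zero_iff
        (((hρm.comp hs).mul (hIm.comp hs)) : Measurable fun x => ρ (s x) * I (s x))).mp h1
    filter_upwards [h3] with x hx
    rcases mul_eq_zero.mp hx with h | h
    · exact Or.inl h
    · refine Or.inr (fun hmem => ?_)
      have : I (s x) = 1 := Set.indicator_of_mem (hNM hmem) 1
      rw [h] at this
      exact one_ne_zero this.symm
  have hinsens : ∀ {h h' : ℝ → ℝ}, h =ᵐ[μ] h' →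
      (fun x => (1 - p x) * h (s x)) =ᵐ[μ] (fun x => (1 - p x) * h' (s x)) := by
    intro h h' hhh
    have hN : μ {y | ¬ h y = h' y} = 0 := ae_iff.mp hhh
    filter_upwards [hnull hN, hae_μ] with x hx hpx
    rcases hx with h0 | hne
    · have hz : (1 : ℝ) - p x = 0 := by
        have h4 := hpx.2.1
        rw [h0, ENNReal.ofReal_eq_zero] at h4
        linarith [(hp01 x).2]
      simp [hz]
    · have : h (s x) = h' (s x) := not_not.mp (fun hc => hne hc)
      rw [this]
  have hpm : Measurable p := (hρm.ennreal_toReal).min measurable_const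
  have hsum_μ : ∀ᵐ x ∂μ, ρ x + ρ (s x) = 1 := hμν.ae_le (hae_ν.mono fun x hx => hx.2.2)
  -- real-valued transfer for nonnegative integrands
  have hTreal_nn : ∀ h : ℝ → ℝ, Measurable h → (∀ x, 0 ≤ h x) → Integrable h μ →
      Integrable (fun x => (1 - p x) * h (s x)) μ ∧
      ∫ x, (1 - p x) * h (s x) ∂μ = ∫ x, (1 - p x) * h x ∂μ := by
    intro h hhm hh0 hhint
    set H : ℝ → ℝ≥0∞ := fun x => ENNReal.ofReal (h x) with hH_def
    have hHm : Measurable H := hhm.ennreal_ofReal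
    have hfin : ∫⁻ x, H x ∂μ < ⊤ := by
      have := hhint.2
      rwa [hasFiniteIntegral_iff_ofReal (Eventually.of_forall hh0)] at this
    have key1 : ∫⁻ x, ENNReal.ofReal ((1 - p x) * h (s x)) ∂μ
        = ∫⁻ x, ρ (s x) * H (s x) ∂μ := by
      refine lintegral_congr_ae ?_
      filter_upwards [hae_μ] with x hx
      rw [ENNReal.ofReal_mul (by linarith [(hp01 x).2]), hx.2.1]
    have key2 : ∫⁻ x, ENNReal.ofReal ((1 - p x) * h x) ∂μ
        = ∫⁻ x, ρ (s x) * H x ∂μ := by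
      refine lintegral_congr_ae ?_
      filter_upwards [hae_μ] with x hx
      rw [ENNReal.ofReal_mul (by linarith [(hp01 x).2]), hx.2.1]
    have key : ∫⁻ x, ENNReal.ofReal ((1 - p x) * h (s x)) ∂μ
        = ∫⁻ x, ENNReal.ofReal ((1 - p x) * h x) ∂μ := by
      rw [key1, key2, hT H hHm]
    have hbound : ∫⁻ x, ρ (s x) * H x ∂μ < ⊤ := by
      refine lt_of_le_of_lt ?_ hfin
      refine lintegral_mono_ae ?_
      filter_upwards [hρs_le] with x hx
      calc ρ (s x) * H x ≤ 1 * H x := mul_le_mul_left hx _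
        _ = H x := one_mul _
    have hfin1 : ∫⁻ x, ENNReal.ofReal ((1 - p x) * h (s x)) ∂μ < ⊤ := by
      rw [key1, hT H hHm]; exact hbound
    have hfin2 : ∫⁻ x, ENNReal.ofReal ((1 - p x) * h x) ∂μ < ⊤ := by
      rw [key2]; exact hbound
    have hnn1 : ∀ x, 0 ≤ (1 - p x) * h (s x) :=
      fun x => mul_nonneg (by linarith [(hp01 x).2]) (hh0 _)
    have hnn2 : ∀ x, 0 ≤ (1 - p x) * h x :=
      fun x => mul_nonneg (by linarith [(hp01 x).2]) (hh0 _)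
    have hm1 : Measurable fun x => (1 - p x) * h (s x) :=
      (measurable_const.sub hpm).mul (hhm.comp hs)
    have hm2 : Measurable fun x => (1 - p x) * h x := (measurable_const.sub hpm).mul hhm
    have hint1 : Integrable (fun x => (1 - p x) * h (s x)) μ := by
      refine ⟨hm1.aestronglyMeasurable, ?_⟩
      rw [hasFiniteIntegral_iff_ofReal (Eventually.of_forall hnn1)]
      exact hfin1
    have hint2 : Integrable (fun x => (1 - p x) * h x) μ := by
      refine ⟨hm2.aestronglyMeasurable, ?_⟩
      rw [hasFiniteIntegral_iff_ofReal (Eventually.of_forall hnn2)]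
      exact hfin2
    refine ⟨hint1, ?_⟩
    rw [integral_eq_lintegral_of_nonneg_ae (Eventually.of_forall hnn1) hm1.aestronglyMeasurable,
      integral_eq_lintegral_of_nonneg_ae (Eventually.of_forall hnn2) hm2.aestronglyMeasurable,
      key]
  -- bounded-multiplier integrability
  have hPint : ∀ h : ℝ → ℝ, Integrable h μ →
      Integrable (fun x => p x * h x) μ ∧ Integrable (fun x => (1 - p x) * h x) μ := by
    intro h hhint
    constructor
    · refine hhint.bdd_mul hpm.aestronglyMeasurable (c := 1) (Eventually.of_forall fun x => ?_)
      rw [Real.norm_eq_abs, abs_of_nonneg (hp01 x).1]; exact (hp01 x).2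
    · refine hhint.bdd_mul ((measurable_const.sub hpm).aestronglyMeasurable) (c := 1) (Eventually.of_forall fun x => ?_)
      rw [Real.norm_eq_abs, abs_of_nonneg (by linarith [(hp01 x).2])]
      linarith [(hp01 x).1]
  -- real-valued transfer, general signed version
  have hTreal : ∀ h : ℝ → ℝ, Measurable h → Integrable h μ →
      Integrable (fun x => (1 - p x) * h (s x)) μ ∧
      ∫ x, (1 - p x) * h (s x) ∂μ = ∫ x, (1 - p x) * h x ∂μ := by
    intro h hhm hhint
    set h1 : ℝ → ℝ := fun x => max (h x) 0 with hh1_def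
    set h2 : ℝ → ℝ := fun x => max (-h x) 0 with hh2_def
    have hdiff : ∀ x, h x = h1 x - h2 x := by
      intro x; simp only [hh1_def, hh2_def]
      rcases le_total (h x) 0 with hc | hc
      · rw [max_eq_right hc, max_eq_left (by linarith)]; ring
      · rw [max_eq_left hc, max_eq_right (by linarith)]; ring
    obtain ⟨i1, e1⟩ := hTreal_nn h1 (hhm.max measurable_const)
      (fun x => le_max_right _ _) hhint.pos_part
    obtain ⟨i2, e2⟩ := hTreal_nn h2 (hhm.neg.max measurable_const)
      (fun x => le_max_right _ _) hhint.neg.pos_part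
    have hint : Integrable (fun x => (1 - p x) * h (s x)) μ := by
      refine (i1.sub i2).congr (Eventually.of_forall fun x => ?_)
      simp only [Pi.sub_apply]
      rw [hdiff (s x)]; ring
    refine ⟨hint, ?_⟩
    calc ∫ x, (1 - p x) * h (s x) ∂μ
        = ∫ x, ((1 - p x) * h1 (s x) - (1 - p x) * h2 (s x)) ∂μ := by
          congr 1; funext x; rw [hdiff (s x)]; ring
      _ = ∫ x, (1 - p x) * h1 (s x) ∂μ - ∫ x, (1 - p x) * h2 (s x) ∂μ :=
          integral_sub i1 i2
      _ = ∫ x, (1 - p x) * h1 x ∂μ - ∫ x, (1 - p x) * h2 x ∂μ := by rw [e1, e2]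
      _ = ∫ x, ((1 - p x) * h1 x - (1 - p x) * h2 x) ∂μ :=
          (integral_sub (hPint h1 hhint.pos_part).2 (hPint h2 hhint.neg.pos_part).2).symm
      _ = ∫ x, (1 - p x) * h x ∂μ := by
          congr 1; funext x; rw [hdiff x]; ring
  have hm_le : symmMS s ≤ (inferInstance : MeasurableSpace ℝ) := fun A hA => hA.1
  haveI : SigmaFinite (μ.trim hm_le) := by infer_instance
  intro f hf
  set f' : ℝ → ℝ := (hf.1).mk f with hf'_def
  have hf'm : Measurable f' := hf.1.stronglyMeasurable_mk.measurable
  have hff' : f =ᵐ[μ] f' := hf.1.ae_eq_mk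
  set g : ℝ → ℝ := fun x => f' x ^ 2 with hg_def
  have hgm : Measurable g := hf'm.pow_const 2
  have hg0 : ∀ x, 0 ≤ g x := fun x => sq_nonneg _
  have hgf : (fun x => f x ^ 2) =ᵐ[μ] g := hff'.mono fun x hx => by
    simp only [hg_def, hx]
  have hfint : Integrable (fun x => f x ^ 2) μ := hf.integrable_sq
  have hgint : Integrable g μ := hfint.congr hgf
  set E : ℝ → ℝ := fun x => p x * g x + (1 - p x) * g (s x) with hE_def
  have hEm : Measurable E := (hpm.mul hgm).add ((measurable_const.sub hpm).mul (hgm.comp hs))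
  have hE0 : ∀ x, 0 ≤ E x := fun x => add_nonneg (mul_nonneg (hp01 x).1 (hg0 x))
      (mul_nonneg (by linarith [(hp01 x).2]) (hg0 _))
  have hEint : Integrable E μ := (hPint g hgint).1.add (hTreal_nn g hgm hg0 hgint).1
  set Et : ℝ → ℝ := fun x => p x * g x + p (s x) * g (s x) with hEt_def
  have hEtsymm : ∀ x, Et (s x) = Et x := fun x => by
    simp only [hEt_def, hss x]; ring
  have hEtm : Measurable Et := (hpm.mul hgm).add ((hpm.comp hs).mul (hgm.comp hs))
  have hEEt : E =ᵐ[μ] Et := by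
    filter_upwards [hae_μ] with x hx
    simp only [hE_def, hEt_def, hx.2.2]
  have hEt_sm : StronglyMeasurable[symmMS s] Et := by
    refine Measurable.stronglyMeasurable (fun B hB => ?_)
    exact ⟨hEtm hB, fun x => by simp only [Set.mem_preimage, hEtsymm x]⟩
  have hset : ∀ A : Set ℝ, MeasurableSet[symmMS s] A → μ A < ⊤ →
      ∫ x in A, E x ∂μ = ∫ x in A, f x ^ 2 ∂μ := by
    rintro A ⟨hAb, hAs⟩ _
    have step1 : ∫ x in A, f x ^ 2 ∂μ = ∫ x in A, g x ∂μ :=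
      setIntegral_congr_ae hAb (hgf.mono fun x hx _ => hx)
    rw [step1]
    have hnnE : 0 ≤ᵐ[μ.restrict A] E := Eventually.of_forall hE0
    have hnng : 0 ≤ᵐ[μ.restrict A] g := Eventually.of_forall hg0
    rw [integral_eq_lintegral_of_nonneg_ae hnnE hEm.aestronglyMeasurable,
      integral_eq_lintegral_of_nonneg_ae hnng hgm.aestronglyMeasurable]
    congr 1
    set G : ℝ → ℝ≥0∞ := fun x => ENNReal.ofReal (g x) with hG_def
    have hGm : Measurable G := hgm.ennreal_ofReal
    have e0 : ∫⁻ x in A, ENNReal.ofReal (E x) ∂μ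
        = ∫⁻ x in A, (ENNReal.ofReal (p x) * G x + ENNReal.ofReal (1 - p x) * G (s x)) ∂μ := by
      refine lintegral_congr fun x => ?_
      simp only [hE_def, hG_def]
      rw [ENNReal.ofReal_add (mul_nonneg (hp01 x).1 (hg0 x))
        (mul_nonneg (by linarith [(hp01 x).2]) (hg0 _)),
        ENNReal.ofReal_mul (hp01 x).1, ENNReal.ofReal_mul (by linarith [(hp01 x).2])]
    rw [e0, lintegral_add_left (f := fun x => ENNReal.ofReal (p x) * G x) ((hpm.ennreal_ofReal).mul hGm) _]
    have e1 : ∫⁻ x in A, ENNReal.ofReal (p x) * G x ∂μ = ∫⁻ x in A, ρ x * G x ∂μ :=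
      lintegral_congr_ae (ae_restrict_of_ae (hae_μ.mono fun x hx => by dsimp only; rw [hx.1]))
    have e2 : ∫⁻ x in A, ENNReal.ofReal (1 - p x) * G (s x) ∂μ
        = ∫⁻ x in A, ρ (s x) * G (s x) ∂μ :=
      lintegral_congr_ae (ae_restrict_of_ae (hae_μ.mono fun x hx => by dsimp only; rw [hx.2.1]))
    rw [e1, e2]
    have e3 : ∫⁻ x in A, ρ (s x) * G (s x) ∂μ = ∫⁻ x in A, ρ (s x) * G x ∂μ := by
      rw [← lintegral_indicator hAb, ← lintegral_indicator hAb]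
      have h4 : ∀ x, A.indicator (fun x => ρ (s x) * G (s x)) x
          = ρ (s x) * (A.indicator G) (s x) := by
        intro x
        by_cases hx : x ∈ A
        · rw [Set.indicator_of_mem hx, Set.indicator_of_mem ((hAs x).mp hx)]
        · rw [Set.indicator_of_notMem hx,
            Set.indicator_of_notMem (fun hc => hx ((hAs x).mpr hc)), mul_zero]
      have h5 : ∀ x, A.indicator (fun x => ρ (s x) * G x) x
          = ρ (s x) * (A.indicator G) x := by
        intro x
        by_cases hx : x ∈ A
        · rw [Set.indicator_of_mem hx, Set.indicator_of_mem hx]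
        · rw [Set.indicator_of_notMem hx, Set.indicator_of_notMem hx, mul_zero]
      calc ∫⁻ x, A.indicator (fun x => ρ (s x) * G (s x)) x ∂μ
          = ∫⁻ x, ρ (s x) * (A.indicator G) (s x) ∂μ := lintegral_congr fun x => h4 x
        _ = ∫⁻ x, ρ (s x) * (A.indicator G) x ∂μ := hT _ (hGm.indicator hAb)
        _ = ∫⁻ x, A.indicator (fun x => ρ (s x) * G x) x ∂μ :=
            lintegral_congr fun x => (h5 x).symm
    rw [e3, ← lintegral_add_left (f := fun x => ρ x * G x) (hρm.mul hGm) _]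
    refine lintegral_congr_ae (ae_restrict_of_ae (hsum_μ.mono fun x hx => ?_))
    dsimp only
    rw [← add_mul, hx, one_mul]
  have hcond : E =ᵐ[μ] μ[(fun y => f y ^ 2)|symmMS s] :=
    ae_eq_condExp_of_forall_setIntegral_eq hm_le hfint
      (fun A _ _ => hEint.integrableOn) hset ⟨Et, hEt_sm, hEEt⟩
  have hconc1 : (μ[(fun y => f y ^ 2)|symmMS s])
      =ᵐ[μ] fun x => p x * f x ^ 2 + (1 - p x) * f (s x) ^ 2 := by
    refine hcond.symm.trans ?_
    have h1 : (fun x => (1 - p x) * g (s x)) =ᵐ[μ] fun x => (1 - p x) * f (s x) ^ 2 :=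
      hinsens hgf.symm
    filter_upwards [h1, hgf] with x hx1 hx2
    show p x * g x + (1 - p x) * g (s x) = p x * f x ^ 2 + (1 - p x) * f (s x) ^ 2
    rw [← hx2, hx1]
  refine ⟨hconc1, ?_⟩
  intro hint
  set G₁ : ℝ → ℝ := fun x => g x * Real.log (g x) with hG₁_def
  have hG₁m : Measurable G₁ := (Real.continuous_mul_log.measurable).comp hgm
  have hlog_ae : (fun x => f x ^ 2 * Real.log (f x ^ 2)) =ᵐ[μ] G₁ :=
    hgf.mono fun x hx => by
      have hx' : f x ^ 2 = g x := hx
      show f x ^ 2 * Real.log (f x ^ 2) = g x * Real.log (g x)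
      rw [hx']
  have hintG : Integrable G₁ μ := hint.congr hlog_ae
  set φE : ℝ → ℝ := fun x => E x * Real.log (E x) with hφE_def
  have hφEm : Measurable φE := (Real.continuous_mul_log.measurable).comp hEm
  have hub : ∀ x, φE x ≤ p x * |G₁ x| + (1 - p x) * |G₁ (s x)| := by
    intro x
    have hcx := Real.convexOn_mul_log.2 (Set.mem_Ici.mpr (hg0 x))
      (Set.mem_Ici.mpr (hg0 (s x))) (hp01 x).1 (by linarith [(hp01 x).2] : 0 ≤ 1 - p x)
      (by ring)
    simp only [smul_eq_mul] at hcx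
    calc φE x ≤ p x * (g x * Real.log (g x)) + (1 - p x) * (g (s x) * Real.log (g (s x))) := hcx
      _ ≤ p x * |G₁ x| + (1 - p x) * |G₁ (s x)| := by
          refine add_le_add ?_ ?_
          · exact mul_le_mul_of_nonneg_left (le_abs_self _) (hp01 x).1
          · exact mul_le_mul_of_nonneg_left (le_abs_self _) (by linarith [(hp01 x).2])
  have habsint : Integrable (fun x => |G₁ x|) μ := hintG.abs
  have hDint : Integrable
      (fun x => p x * |G₁ x| + (1 - p x) * |G₁ (s x)| + 1) μ :=
    ((hPint _ habsint).1.add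
      (hTreal_nn _ hG₁m.abs (fun x => abs_nonneg _) habsint).1).add (integrable_const 1)
  have hφEint : Integrable φE μ := by
    refine Integrable.mono' hDint hφEm.aestronglyMeasurable
      (Eventually.of_forall fun x => ?_)
    rw [Real.norm_eq_abs, abs_le]
    have hnn : 0 ≤ p x * |G₁ x| + (1 - p x) * |G₁ (s x)| :=
      add_nonneg (mul_nonneg (hp01 x).1 (abs_nonneg _))
        (mul_nonneg (by linarith [(hp01 x).2]) (abs_nonneg _))
    constructor
    · have := mul_log_ge_neg_one (hE0 x)
      have hφ : -1 ≤ φE x := this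
      linarith
    · linarith [hub x]
  -- the RHS
  have hRHS : (∫ x, entropy (ENNReal.ofReal (p x) • Measure.dirac x
        + ENNReal.ofReal (1 - p x) • Measure.dirac (s x)) (fun y => f y ^ 2) ∂μ)
      = ∫ x, (p x * G₁ x + (1 - p x) * G₁ (s x) - φE x) ∂μ := by
    refine integral_congr_ae ?_
    have hA : (fun x => (1 - p x) * f (s x) ^ 2) =ᵐ[μ] fun x => (1 - p x) * g (s x) :=
      hinsens hgf
    have hB : (fun x => (1 - p x) * (f (s x) ^ 2 * Real.log (f (s x) ^ 2)))
        =ᵐ[μ] fun x => (1 - p x) * G₁ (s x) := hinsens hlog_ae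
    filter_upwards [hgf, hA, hB] with x hx hxA hxB
    have hx' : f x ^ 2 = g x := hx
    have hxA' : (1 - p x) * f (s x) ^ 2 = (1 - p x) * g (s x) := hxA
    have hxB' : (1 - p x) * (f (s x) ^ 2 * Real.log (f (s x) ^ 2))
        = (1 - p x) * G₁ (s x) := hxB
    rw [entropy_two_point (hp01 x).1 (by linarith [(hp01 x).2] : (0:ℝ) ≤ 1 - p x) x (s x)
      (fun y => f y ^ 2)]
    show p x * (f x ^ 2 * Real.log (f x ^ 2))
        + (1 - p x) * (f (s x) ^ 2 * Real.log (f (s x) ^ 2))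
        - (p x * f x ^ 2 + (1 - p x) * f (s x) ^ 2)
          * Real.log (p x * f x ^ 2 + (1 - p x) * f (s x) ^ 2)
        = p x * G₁ x + (1 - p x) * G₁ (s x) - φE x
    rw [hxB', hxA', hx']
  rw [hRHS]
  have hsplit : ∫ x, (p x * G₁ x + (1 - p x) * G₁ (s x) - φE x) ∂μ
      = (∫ x, (p x * G₁ x + (1 - p x) * G₁ (s x)) ∂μ) - ∫ x, φE x ∂μ :=
    integral_sub ((hPint G₁ hintG).1.add (hTreal G₁ hG₁m hintG).1) hφEint
  have hsum2 : ∫ x, (p x * G₁ x + (1 - p x) * G₁ (s x)) ∂μ = ∫ x, G₁ x ∂μ := by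
    rw [integral_add (hPint G₁ hintG).1 (hTreal G₁ hG₁m hintG).1,
      (hTreal G₁ hG₁m hintG).2, ← integral_add (hPint G₁ hintG).1 (hPint G₁ hintG).2]
    congr 1; funext x; ring
  rw [hsplit, hsum2]
  have hI1 : ∫ x, (μ[(fun y => f y ^ 2)|symmMS s]) x ∂μ = ∫ x, f x ^ 2 ∂μ :=
    integral_condExp hm_le
  have hI2 : ∫ x, (μ[(fun y => f y ^ 2)|symmMS s]) x
        * Real.log ((μ[(fun y => f y ^ 2)|symmMS s]) x) ∂μ = ∫ x, φE x ∂μ :=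
    integral_congr_ae (hcond.symm.mono fun x hx => by
      simp only [hφE_def]; rw [hx])
  have hI3 : ∫ x, f x ^ 2 * Real.log (f x ^ 2) ∂μ = ∫ x, G₁ x ∂μ := integral_congr_ae hlog_ae
  have hI4 : ∫ x, f x ^ 2 ∂μ = ∫ x, g x ∂μ := integral_congr_ae hgf
  simp only [entropy]
  rw [hI1, hI2, hI3, hI4]
  ring
end Abstract

/-- There is a measurable `p : ℝ → [0,1]` such that for every `f ∈ L₂(μ)`, the
`L₂`-symmetrization `f̂ = (E_μ[f²|F̂])^{1/2}` satisfies
`f̂²(x) = p(x) f²(x) + (1−p(x)) f²(s(x))` for `μ`-a.a. `x`, and, with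
`ν_x = p(x) δ_x + (1−p(x)) δ_{s(x)}`,
`Ent_μ f² − Ent_μ f̂² = ∫ Ent_{ν_x}(f²) μ(dx)` whenever `f² log f²` is `μ`-integrable. -/
theorem symmetrization_entropy_decomposition
    (μ : Measure ℝ) [IsProbabilityMeasure μ] [NullSingletonClass μ]
    (a b : ℝ → ℝ) (hab0 : a 0 = b 0)
    (ha_cont : ContinuousOn a (Ico (0:ℝ) 1)) (hb_cont : ContinuousOn b (Ico (0:ℝ) 1))
    (ha_anti : StrictAntiOn a (Ico (0:ℝ) 1)) (hb_mono : StrictMonoOn b (Ico (0:ℝ) 1))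
    (ha_lim : Tendsto a (nhdsWithin 1 (Iio 1)) atBot)
    (hb_lim : Tendsto b (nhdsWithin 1 (Iio 1)) atTop)
    (hD_lt_one : ∀ t : ℝ, 0 ≤ t → t < 1 → μ (DI a b t) < 1) :
    ∃ p : ℝ → ℝ, Measurable p ∧ (∀ x, p x ∈ Icc (0:ℝ) 1) ∧
      ∀ f : ℝ → ℝ, MemLp f 2 μ →
        ((μ[(fun y => f y ^ 2)|symmMS (reflI a b)])
            =ᵐ[μ] fun x => p x * f x ^ 2 + (1 - p x) * f (reflI a b x) ^ 2)
        ∧ (Integrable (fun x => f x ^ 2 * Real.log (f x ^ 2)) μ →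
            entropy μ (fun x => f x ^ 2)
                - entropy μ (μ[(fun y => f y ^ 2)|symmMS (reflI a b)])
              = ∫ x, entropy
                  (ENNReal.ofReal (p x) • Measure.dirac x
                    + ENNReal.ofReal (1 - p x) • Measure.dirac (reflI a b x))
                  (fun y => f y ^ 2) ∂μ) := by
  have hs : Measurable (reflI a b) :=
    reflI_measurable hab0 ha_cont hb_cont ha_anti hb_mono ha_lim hb_lim
  have hss : ∀ x, reflI a b (reflI a b x) = x :=
    reflI_invol hab0 ha_cont hb_cont ha_anti hb_mono ha_lim hb_lim
  exact symm_condexp_entropy μ (reflI a b) hs hss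
end
end

section
/- Let μ be a probability measure on ℝ with everywhere positive density p_μ, and let {D_t} be the quantile trimmed regions with associated reflection map s and symmetric σ-algebra F̂. Then for every f ∈ L₂(ℝ, μ), the L₂-symmetrization f̂ = (E_μ[f²|F̂])^{1/2} satisfies f̂(x) = sqrt( (f²(x) + f²(s(x))) / 2 ) for μ-almost all x. -/
open MeasureTheory Set Real Filter
open scoped Topology ENNReal

set_option linter.unusedSectionVars false
set_option linter.unusedVariables false

noncomputable section

/-- The cumulative distribution function `F_μ(x) = μ((−∞,x])`. -/
def cdfR (μ : Measure ℝ) (x : ℝ) : ℝ := (μ (Iic x)).toReal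

/-- The quantile function `q_v = F_μ^{−1}(v)`. -/
def quantile (μ : Measure ℝ) (v : ℝ) : ℝ := sInf {x | v ≤ cdfR μ x}

/-- The quantile trimmed regions: `D_t = [q_{1/2−t/2}, q_{1/2+t/2}]` for `t ∈ [0,1)`
and `D_1 = ℝ`. -/
def DQ (μ : Measure ℝ) (t : ℝ) : Set ℝ :=
  if t < 1 then Icc (quantile μ (1/2 - t/2)) (quantile μ (1/2 + t/2)) else univ

/-- `τ(x) = inf {t ∈ [0,1] : x ∈ D_t}` for the quantile trimmed regions. -/
def tauQ (μ : Measure ℝ) (x : ℝ) : ℝ := sInf {t | t ∈ Icc (0:ℝ) 1 ∧ x ∈ DQ μ t}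

/-- The reflection map of the quantile trimmed regions: for `x ≠ m` (the median),
`s(x)` is the endpoint of `D_{τ(x)}` other than `x`, and `s(m) = m`. -/
def reflQ (μ : Measure ℝ) (x : ℝ) : ℝ :=
  if x < quantile μ (1/2) then quantile μ (1/2 + tauQ μ x / 2)
  else if quantile μ (1/2) < x then quantile μ (1/2 - tauQ μ x / 2)
  else quantile μ (1/2)

section Aux

variable {μ : Measure ℝ} [IsProbabilityMeasure μ] {pμ : ℝ → ℝ}

lemma measure_pos_of_volume_pos
    (hpμ_pos : ∀ x, 0 < pμ x) (hpμ_meas : Measurable pμ)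
    (hμ : μ = volume.withDensity fun x => ENNReal.ofReal (pμ x))
    {A : Set ℝ} (hA : MeasurableSet A) (hvol : 0 < volume A) : 0 < μ A := by
  rw [hμ, withDensity_apply _ hA, lintegral_pos_iff_support hpμ_meas.ennreal_ofReal]
  have hsupp : Function.support (fun x => ENNReal.ofReal (pμ x)) = univ := by
    ext x
    simp only [Function.mem_support, ne_eq, ENNReal.ofReal_eq_zero, not_le, mem_univ, iff_true]
    exact hpμ_pos x
  rw [hsupp, Measure.restrict_apply_univ]
  exact hvol

lemma cdfR_strictMono
    (hpμ_pos : ∀ x, 0 < pμ x) (hpμ_meas : Measurable pμ)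
    (hμ : μ = volume.withDensity fun x => ENNReal.ofReal (pμ x)) :
    StrictMono (cdfR μ) := by
  intro x y hxy
  have hunion : μ (Iic x) + μ (Ioc x y) = μ (Iic y) := by
    rw [← measure_union (Iic_disjoint_Ioc le_rfl) measurableSet_Ioc,
      Iic_union_Ioc_eq_Iic hxy.le]
  have hpos : 0 < μ (Ioc x y) :=
    measure_pos_of_volume_pos hpμ_pos hpμ_meas hμ measurableSet_Ioc
      (by rw [Real.volume_Ioc]; simp [hxy, sub_pos])
  have hlt : μ (Iic x) < μ (Iic y) := by
    rw [← hunion]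
    exact ENNReal.lt_add_right (measure_ne_top μ _) hpos.ne'
  exact ENNReal.toReal_lt_toReal (measure_ne_top μ _) (measure_ne_top μ _) |>.mpr hlt

lemma cdfR_pos
    (hpμ_pos : ∀ x, 0 < pμ x) (hpμ_meas : Measurable pμ)
    (hμ : μ = volume.withDensity fun x => ENNReal.ofReal (pμ x)) (x : ℝ) :
    0 < cdfR μ x :=
  ENNReal.toReal_pos
    (measure_pos_of_volume_pos hpμ_pos hpμ_meas hμ measurableSet_Iic
      (by rw [Real.volume_Iic]; exact ENNReal.zero_lt_top)).ne' (measure_ne_top μ _)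

lemma cdfR_lt_one
    (hpμ_pos : ∀ x, 0 < pμ x) (hpμ_meas : Measurable pμ)
    (hμ : μ = volume.withDensity fun x => ENNReal.ofReal (pμ x)) (x : ℝ) :
    cdfR μ x < 1 := by
  have hunion : μ (Iic x) + μ (Ioi x) = 1 := by
    rw [← measure_union (Iic_disjoint_Ioi le_rfl) measurableSet_Ioi, Iic_union_Ioi]
    simp
  have hpos : 0 < μ (Ioi x) :=
    measure_pos_of_volume_pos hpμ_pos hpμ_meas hμ measurableSet_Ioi
      (by rw [Real.volume_Ioi]; exact ENNReal.zero_lt_top)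
  have hlt : μ (Iic x) < 1 := by
    rw [← hunion]
    exact ENNReal.lt_add_right (measure_ne_top μ _) hpos.ne'
  have := ENNReal.toReal_lt_toReal (measure_ne_top μ _) ENNReal.one_ne_top |>.mpr hlt
  simpa [cdfR] using this

lemma noAtoms_of_density
    (hpμ_meas : Measurable pμ)
    (hμ : μ = volume.withDensity fun x => ENNReal.ofReal (pμ x)) :
    NullSingletonClass μ := by
  constructor
  intro a
  rw [hμ, withDensity_apply _ (measurableSet_singleton a)]
  exact setLIntegral_measure_zero _ _ (measure_singleton a)

lemma cdfR_continuous [NullSingletonClass μ] : Continuous (cdfR μ) := by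
  have hcdf : cdfR μ = ⇑(ProbabilityTheory.cdf μ) :=
    funext fun x => (ProbabilityTheory.cdf_eq_real μ x).symm
  rw [hcdf, continuous_iff_continuousAt]
  intro a
  rw [(ProbabilityTheory.monotone_cdf μ).continuousAt_iff_leftLim_eq_rightLim,
    (ProbabilityTheory.cdf μ).rightLim_eq]
  have h := (ProbabilityTheory.cdf μ).measure_singleton a
  rw [ProbabilityTheory.measure_cdf μ, measure_singleton a, eq_comm,
    ENNReal.ofReal_eq_zero] at h
  have h2 := (ProbabilityTheory.monotone_cdf μ).leftLim_le (le_refl a)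
  linarith

lemma cdfR_tendsto_atBot : Tendsto (cdfR μ) atBot (𝓝 0) := by
  have hempty : ⋂ x : ℝ, Iic x = ∅ := by
    apply iInter_Iic_eq_empty_iff.2
    rintro ⟨c, hc⟩
    have := hc (mem_range_self (c - 1))
    linarith
  have h := tendsto_measure_iInter_atBot (μ := μ) (s := fun x : ℝ => Iic x)
    (fun _ => measurableSet_Iic.nullMeasurableSet) (fun i j hij => Iic_subset_Iic.2 hij)
    ⟨0, measure_ne_top μ _⟩
  rw [hempty, measure_empty] at h
  have := (ENNReal.tendsto_toReal (a := 0) (by simp)).comp h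
  exact this

lemma cdfR_tendsto_atTop : Tendsto (cdfR μ) atTop (𝓝 1) := by
  have h := tendsto_measure_Iic_atTop (μ := μ)
  rw [measure_univ] at h
  have := (ENNReal.tendsto_toReal (a := 1) (by simp)).comp h
  exact this

lemma cdfR_quantile [NullSingletonClass μ]
    (hsm : StrictMono (cdfR μ)) {v : ℝ} (hv0 : 0 < v) (hv1 : v < 1) :
    cdfR μ (quantile μ v) = v := by
  obtain ⟨a, ha⟩ : ∃ a, cdfR μ a < v :=
    ((cdfR_tendsto_atBot (μ := μ)).eventually_lt_const hv0).exists
  obtain ⟨b, hb⟩ : ∃ b, v < cdfR μ b :=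
    ((cdfR_tendsto_atTop (μ := μ)).eventually_const_lt hv1).exists
  obtain ⟨z, hz⟩ := intermediate_value_univ a b (cdfR_continuous (μ := μ)) ⟨ha.le, hb.le⟩
  have hset : {x | v ≤ cdfR μ x} = Ici z := by
    ext x
    simp only [mem_setOf_eq, mem_Ici, ← hz]
    exact ⟨fun h => (hsm.le_iff_le).1 h, fun h => (hsm.le_iff_le).2 h⟩
  rw [quantile, hset, csInf_Ici, hz]

end Aux

section Aux2

variable {μ : Measure ℝ} [IsProbabilityMeasure μ]

-- assume the two key facts as hypotheses
variable (hsm : StrictMono (cdfR μ))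
  (hq : ∀ v : ℝ, 0 < v → v < 1 → cdfR μ (quantile μ v) = v)
  (h0 : ∀ x, 0 < cdfR μ x) (h1 : ∀ x, cdfR μ x < 1)

include hsm hq h0 h1

lemma quantile_le_iff (v x : ℝ) (hv0 : 0 < v) (hv1 : v < 1) :
    quantile μ v ≤ x ↔ v ≤ cdfR μ x := by
  conv_rhs => rw [← hq v hv0 hv1]
  exact (hsm.le_iff_le).symm

lemma le_quantile_iff (v x : ℝ) (hv0 : 0 < v) (hv1 : v < 1) :
    x ≤ quantile μ v ↔ cdfR μ x ≤ v := by
  conv_rhs => rw [← hq v hv0 hv1]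
  exact (hsm.le_iff_le).symm

lemma quantile_cdfR (x : ℝ) : quantile μ (cdfR μ x) = x :=
  hsm.injective (hq _ (h0 x) (h1 x))

lemma tauQ_eq (x : ℝ) : tauQ μ x = |2 * cdfR μ x - 1| := by
  set c := |2 * cdfR μ x - 1| with hc
  have hc0 : 0 ≤ c := abs_nonneg _
  have hc1 : c < 1 := abs_lt.2 ⟨by linarith [h0 x], by linarith [h1 x]⟩
  have hset : {t | t ∈ Icc (0:ℝ) 1 ∧ x ∈ DQ μ t} = Icc c 1 := by
    ext t
    simp only [mem_setOf_eq, mem_Icc, DQ]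
    constructor
    · rintro ⟨⟨ht0, ht1⟩, hx⟩
      refine ⟨?_, ht1⟩
      rcases lt_or_ge t 1 with h | h
      · rw [if_pos h] at hx
        obtain ⟨hx1, hx2⟩ := hx
        have e1 : 1/2 - t/2 ≤ cdfR μ x :=
          (quantile_le_iff hsm hq h0 h1 (1/2 - t/2) x (by linarith) (by linarith)).1 hx1
        have e2 : cdfR μ x ≤ 1/2 + t/2 :=
          (le_quantile_iff hsm hq h0 h1 (1/2 + t/2) x (by linarith) (by linarith)).1 hx2
        rw [hc, abs_le]
        constructor <;> linarith
      · linarith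
    · rintro ⟨hct, ht1⟩
      have ht0 : 0 ≤ t := hc0.trans hct
      refine ⟨⟨ht0, ht1⟩, ?_⟩
      rcases lt_or_ge t 1 with h | h
      · rw [if_pos h]
        have hab := abs_le.1 hct
        obtain ⟨ha, hb⟩ := hab
        constructor
        · exact (quantile_le_iff hsm hq h0 h1 (1/2 - t/2) x (by linarith) (by linarith)).2 (by linarith)
        · exact (le_quantile_iff hsm hq h0 h1 (1/2 + t/2) x (by linarith) (by linarith)).2 (by linarith)
      · rw [if_neg (not_lt.2 h)]; exact mem_univ x
  rw [tauQ, hset, csInf_Icc hc1.le]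

lemma reflQ_eq (x : ℝ) : reflQ μ x = quantile μ (1 - cdfR μ x) := by
  have hm : cdfR μ (quantile μ (1/2)) = 1/2 := hq _ (by norm_num) (by norm_num)
  rw [reflQ, tauQ_eq hsm hq h0 h1]
  rcases lt_trichotomy x (quantile μ (1/2)) with h | h | h
  · rw [if_pos h]
    have hlt : cdfR μ x < 1/2 := by have := hsm h; rwa [hm] at this
    congr 1
    rw [abs_of_neg (by linarith)]
    ring
  · rw [if_neg (by rw [h]; exact lt_irrefl _), if_neg (by rw [h]; exact lt_irrefl _)]
    have hx : cdfR μ x = 1/2 := by rw [h, hm]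
    rw [hx]
    norm_num
  · rw [if_neg (not_lt.2 h.le), if_pos h]
    have hlt : 1/2 < cdfR μ x := by have := hsm h; rwa [hm] at this
    congr 1
    rw [abs_of_pos (by linarith)]
    ring

lemma cdfR_reflQ (x : ℝ) : cdfR μ (reflQ μ x) = 1 - cdfR μ x := by
  rw [reflQ_eq hsm hq h0 h1]
  exact hq _ (by linarith [h1 x]) (by linarith [h0 x])

lemma reflQ_involutive (x : ℝ) : reflQ μ (reflQ μ x) = x := by
  rw [reflQ_eq hsm hq h0 h1 (reflQ μ x), cdfR_reflQ hsm hq h0 h1]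
  have : 1 - (1 - cdfR μ x) = cdfR μ x := by ring
  rw [this, quantile_cdfR hsm hq h0 h1]

lemma reflQ_antitone : Antitone (reflQ μ) := by
  intro x y hxy
  have : cdfR μ (reflQ μ y) ≤ cdfR μ (reflQ μ x) := by
    rw [cdfR_reflQ hsm hq h0 h1, cdfR_reflQ hsm hq h0 h1]
    have := hsm.monotone hxy
    linarith
  exact hsm.le_iff_le.1 this

lemma reflQ_measurable : Measurable (reflQ μ) :=
  (reflQ_antitone hsm hq h0 h1).measurable

lemma reflQ_measurePreserving [NullSingletonClass μ] : MeasurePreserving (reflQ μ) μ μ := by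
  refine ⟨reflQ_measurable hsm hq h0 h1, ?_⟩
  haveI : IsProbabilityMeasure (μ.map (reflQ μ)) :=
    Measure.isProbabilityMeasure_map (reflQ_measurable hsm hq h0 h1).aemeasurable
  refine Measure.ext_of_Iic _ _ (fun a => ?_)
  rw [Measure.map_apply (reflQ_measurable hsm hq h0 h1) measurableSet_Iic]
  have hpre : reflQ μ ⁻¹' Iic a = Ici (reflQ μ a) := by
    ext x
    simp only [mem_preimage, mem_Iic, mem_Ici]
    rw [← hsm.le_iff_le, ← hsm.le_iff_le (a := reflQ μ a),
      cdfR_reflQ hsm hq h0 h1, cdfR_reflQ hsm hq h0 h1]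
    constructor <;> intro h <;> linarith
  rw [hpre]
  have hsum : μ (Iio (reflQ μ a)) + μ (Ici (reflQ μ a)) = 1 := by
    rw [← measure_union (Iio_disjoint_Ici le_rfl) measurableSet_Ici, Iio_union_Ici]
    simp
  have hIio : μ (Iio (reflQ μ a)) = μ (Iic (reflQ μ a)) := measure_congr (Iio_ae_eq_Iic)
  refine (ENNReal.toReal_eq_toReal_iff' (measure_ne_top μ _) (measure_ne_top μ _)).1 ?_
  have h1' : (μ (Ici (reflQ μ a))).toReal = 1 - cdfR μ (reflQ μ a) := by
    have := congrArg ENNReal.toReal hsum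
    rw [ENNReal.toReal_add (measure_ne_top μ _) (measure_ne_top μ _)] at this
    simp only [ENNReal.toReal_one] at this
    have h2 : (μ (Iio (reflQ μ a))).toReal = cdfR μ (reflQ μ a) := by
      rw [hIio]; rfl
    linarith
  rw [h1', cdfR_reflQ hsm hq h0 h1]
  show _ = cdfR μ a
  ring

end Aux2

theorem condexp_symm
    (μ : Measure ℝ) [IsProbabilityMeasure μ] (s : ℝ → ℝ)
    (hmeas : Measurable s) (hps : MeasurePreserving s μ μ) (hinv : ∀ x, s (s x) = x)
    (f : ℝ → ℝ) (hf : MemLp f 2 μ) :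
    ∀ᵐ x ∂μ,
      Real.sqrt ((μ[(fun y => f y ^ 2)|symmMS s]) x)
        = Real.sqrt ((f x ^ 2 + f (s x) ^ 2) / 2) := by
  have hle : symmMS s ≤ (inferInstance : MeasurableSpace ℝ) := fun A hA => hA.1
  have hemb : MeasurableEmbedding s :=
    (MeasurableEquiv.mk (Equiv.mk s s hinv hinv) hmeas hmeas).measurableEmbedding
  have hsqint : Integrable (fun x => f x ^ 2) μ := hf.integrable_sq
  have hscomp : Integrable (fun x => f (s x) ^ 2) μ := by
    have : Integrable ((fun y => f y ^ 2) ∘ s) μ :=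
      Integrable.comp_measurable (by rwa [hps.map_eq]) hmeas
    exact this
  set g : ℝ → ℝ := fun x => (f x ^ 2 + f (s x) ^ 2) / 2 with hg
  have hgint : Integrable g μ := (hsqint.add hscomp).div_const 2
  -- measurable version
  set f' := hf.1.mk f with hf'def
  have hf'm : StronglyMeasurable f' := hf.1.stronglyMeasurable_mk
  set g' : ℝ → ℝ := fun x => (f' x ^ 2 + f' (s x) ^ 2) / 2 with hg'
  have hg'_borel : Measurable g' :=
    ((hf'm.measurable.pow_const 2).add
      ((hf'm.measurable.comp hmeas).pow_const 2)).div_const 2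
  have hg'_inv : ∀ x, g' (s x) = g' x := by
    intro x
    simp only [hg', hinv x]
    ring
  have hg'_meas : Measurable[symmMS s] g' := by
    intro B hB
    refine ⟨hg'_borel hB, fun x => ?_⟩
    simp only [Set.mem_preimage, hg'_inv x]
  have hgg' : g =ᵐ[μ] g' := by
    have h1 : f =ᵐ[μ] f' := hf.1.ae_eq_mk
    have h2 : (fun x => f (s x)) =ᵐ[μ] fun x => f' (s x) :=
      hps.quasiMeasurePreserving.ae_eq_comp h1
    filter_upwards [h1, h2] with x e1 e2
    simp only [hg, hg', e1, e2]
  have hgm : AEStronglyMeasurable[symmMS s] g μ :=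
    ⟨g', Measurable.stronglyMeasurable hg'_meas, hgg'⟩
  have hg_int : ∀ A : Set ℝ, MeasurableSet[symmMS s] A → μ A < ∞ → IntegrableOn g A μ :=
    fun A _ _ => hgint.integrableOn
  have hg_eq : ∀ A : Set ℝ, MeasurableSet[symmMS s] A → μ A < ∞ →
      ∫ x in A, g x ∂μ = ∫ x in A, f x ^ 2 ∂μ := by
    intro A hA _
    have hAinv : s ⁻¹' A = A := by
      ext x
      simp only [Set.mem_preimage]
      exact (hA.2 x).symm
    have key : ∫ x in A, f (s x) ^ 2 ∂μ = ∫ x in A, f x ^ 2 ∂μ := by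
      conv_lhs => rw [← hAinv]
      exact hps.setIntegral_preimage_emb hemb (fun y => f y ^ 2) A
    have hsplit : ∫ x in A, g x ∂μ
        = ((∫ x in A, f x ^ 2 ∂μ) + ∫ x in A, f (s x) ^ 2 ∂μ) / 2 := by
      simp only [hg]
      rw [integral_div, integral_add hsqint.integrableOn hscomp.integrableOn]
    rw [hsplit, key]
    ring
  have hcond : g =ᵐ[μ] μ[(fun y => f y ^ 2)|symmMS s] :=
    ae_eq_condExp_of_forall_setIntegral_eq hle hsqint hg_int hg_eq hgm
  filter_upwards [hcond] with x hx
  rw [← hx]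

/-- Identity (16): for the quantile trimmed regions, the `L₂`-symmetrization
`f̂ = (E_μ[f²|F̂])^{1/2}` of every `f ∈ L₂(μ)` satisfies
`f̂(x) = sqrt((f²(x) + f²(s(x)))/2)` for `μ`-almost all `x`. -/
theorem symmetrization_eq_sqrt_mean
    (μ : Measure ℝ) [IsProbabilityMeasure μ]
    (pμ : ℝ → ℝ) (hpμ_pos : ∀ x, 0 < pμ x) (hpμ_meas : Measurable pμ)
    (hμ : μ = volume.withDensity fun x => ENNReal.ofReal (pμ x))
    (f : ℝ → ℝ) (hf : MemLp f 2 μ) :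
    ∀ᵐ x ∂μ,
      Real.sqrt ((μ[(fun y => f y ^ 2)|symmMS (reflQ μ)]) x)
        = Real.sqrt ((f x ^ 2 + f (reflQ μ x) ^ 2) / 2) := by
  haveI : NullSingletonClass μ := noAtoms_of_density hpμ_meas hμ
  have hsm : StrictMono (cdfR μ) := cdfR_strictMono hpμ_pos hpμ_meas hμ
  have h0 : ∀ x, 0 < cdfR μ x := cdfR_pos hpμ_pos hpμ_meas hμ
  have h1 : ∀ x, cdfR μ x < 1 := cdfR_lt_one hpμ_pos hpμ_meas hμ
  have hq : ∀ v : ℝ, 0 < v → v < 1 → cdfR μ (quantile μ v) = v :=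
    fun v hv0 hv1 => cdfR_quantile hsm hv0 hv1
  exact condexp_symm μ (reflQ μ)
    (reflQ_measurable hsm hq h0 h1)
    (reflQ_measurePreserving hsm hq h0 h1)
    (reflQ_involutive hsm hq h0 h1)
    f hf
end
end
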